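/- arXiv:1511.01781 — 5 statements merged into one kernel-verified Lean document; each statement's English description precedes it below -/
import Mathlib

section
/- Let A,B,C,D,E ∈ ℂ satisfy AB − 2AC + DE = 0, A ≠ 0, D² ≠ 4A² and E² ≠ 4A². Then there are exactly eight 2-dimensional ℂ-linear subspaces W of ℂ⁴ such that both the quadratic form xy + zw and the quartic F_{A,B,C,D,E} vanish identically on W; that is, the surface X_{A,B,C,D,E} contains exactly eight lines lying on the quadric Q₆ = {xy + zw = 0} ⊂ ℙ³(ℂ). -/
/-- The quartic `F_{A,B,C,D,E} = A(x⁴+y⁴+z⁴+w⁴) + Bxyzw + C(x²y²+z²w²) + D(x²z²+y²w²)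
+ E(x²w²+y²z²)`, as a function on `ℂ⁴`. -/
def quarticF (A B C D E : ℂ) (v : Fin 4 → ℂ) : ℂ :=
  A * (v 0 ^ 4 + v 1 ^ 4 + v 2 ^ 4 + v 3 ^ 4) + B * (v 0 * v 1 * v 2 * v 3)
    + C * (v 0 ^ 2 * v 1 ^ 2 + v 2 ^ 2 * v 3 ^ 2)
    + D * (v 0 ^ 2 * v 2 ^ 2 + v 1 ^ 2 * v 3 ^ 2)
    + E * (v 0 ^ 2 * v 3 ^ 2 + v 1 ^ 2 * v 2 ^ 2)

open Submodule

namespace EightLines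

noncomputable def L1 (s : ℂ) : Submodule ℂ (Fin 4 → ℂ) :=
  Submodule.span ℂ {![s, 0, 0, 1], ![0, -1, s, 0]}

noncomputable def L2 (u : ℂ) : Submodule ℂ (Fin 4 → ℂ) :=
  Submodule.span ℂ {![u, 0, 1, 0], ![0, -1, 0, u]}

lemma mem_L1 (s : ℂ) (x : Fin 4 → ℂ) :
    x ∈ L1 s ↔ ∃ m n : ℂ, x = ![m * s, -n, n * s, m] := by
  rw [L1, Submodule.mem_span_pair]
  constructor
  · rintro ⟨m, n, rfl⟩; exact ⟨m, n, by funext i; fin_cases i <;> simp⟩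
  · rintro ⟨m, n, rfl⟩; exact ⟨m, n, by funext i; fin_cases i <;> simp⟩

lemma mem_L2 (u : ℂ) (x : Fin 4 → ℂ) :
    x ∈ L2 u ↔ ∃ m n : ℂ, x = ![m * u, -n, m, n * u] := by
  rw [L2, Submodule.mem_span_pair]
  constructor
  · rintro ⟨m, n, rfl⟩; exact ⟨m, n, by funext i; fin_cases i <;> simp⟩
  · rintro ⟨m, n, rfl⟩; exact ⟨m, n, by funext i; fin_cases i <;> simp⟩

lemma finrank_span_pair {x y : Fin 4 → ℂ} (h : LinearIndependent ℂ ![x, y]) :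
    Module.finrank ℂ (span ℂ ({x, y} : Set (Fin 4 → ℂ))) = 2 := by
  have hr : Set.range ![x, y] = ({x, y} : Set (Fin 4 → ℂ)) := by
    simp [Matrix.range_cons, Matrix.range_empty, Set.pair_comm]
  have := finrank_span_eq_card h
  rw [hr] at this
  simpa using this

lemma li_L1 (s : ℂ) : LinearIndependent ℂ ![(![s, 0, 0, 1] : Fin 4 → ℂ), ![0, -1, s, 0]] := by
  rw [LinearIndependent.pair_iff]
  intro c d hcd
  have h3 := congrFun hcd 3
  have h1 := congrFun hcd 1
  simp at h3 h1
  exact ⟨h3, h1⟩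

lemma li_L2 (u : ℂ) : LinearIndependent ℂ ![(![u, 0, 1, 0] : Fin 4 → ℂ), ![0, -1, 0, u]] := by
  rw [LinearIndependent.pair_iff]
  intro c d hcd
  have h3 := congrFun hcd 2
  have h1 := congrFun hcd 1
  simp at h3 h1
  exact ⟨h3, h1⟩

lemma finrank_L1 (s : ℂ) : Module.finrank ℂ (L1 s) = 2 := by
  rw [L1]; exact finrank_span_pair (li_L1 s)

lemma finrank_L2 (u : ℂ) : Module.finrank ℂ (L2 u) = 2 := by
  rw [L2]; exact finrank_span_pair (li_L2 u)

lemma L1_inj {s s' : ℂ} (h : L1 s = L1 s') : s = s' := by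
  have hx : (![s, 0, 0, 1] : Fin 4 → ℂ) ∈ L1 s' := by
    rw [← h, L1]; exact Submodule.subset_span (by simp)
  rw [mem_L1] at hx
  obtain ⟨m, n, hmn⟩ := hx
  have h0 := congrFun hmn 0
  have h3 := congrFun hmn 3
  simp at h0 h3
  rw [h0, ← h3, one_mul]

lemma L2_inj {u u' : ℂ} (h : L2 u = L2 u') : u = u' := by
  have hx : (![u, 0, 1, 0] : Fin 4 → ℂ) ∈ L2 u' := by
    rw [← h, L2]; exact Submodule.subset_span (by simp)
  rw [mem_L2] at hx
  obtain ⟨m, n, hmn⟩ := hx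
  have h0 := congrFun hmn 0
  have h2 := congrFun hmn 2
  simp at h0 h2
  rw [h0, ← h2, one_mul]

lemma L1_ne_L2 {s u : ℂ} (hu : u ≠ 0) : L1 s ≠ L2 u := by
  intro h
  have hx : (![0, -1, s, 0] : Fin 4 → ℂ) ∈ L2 u := by
    rw [← h, L1]; exact Submodule.subset_span (by simp)
  rw [mem_L2] at hx
  obtain ⟨m, n, hmn⟩ := hx
  have h1 := congrFun hmn 1
  have h3 := congrFun hmn 3
  simp at h1 h3
  rw [← h1] at h3
  simp at h3
  exact hu h3

lemma quarticF_single (A B C D E : ℂ) (i : Fin 4) :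
    quarticF A B C D E (Pi.single i 1) = A := by
  fin_cases i <;> simp [quarticF, Pi.single_apply]

lemma degenerate_contra (A B C D E : ℂ) (hA : A ≠ 0) {a b : Fin 4 → ℂ}
    (hli : LinearIndependent ℂ ![a, b])
    (hF : ∀ c d : ℂ, quarticF A B C D E (c • a + d • b) = 0)
    (i j : Fin 4) (hij : i ≠ j)
    (ha : ∀ k, k ≠ i → k ≠ j → a k = 0) (hb : ∀ k, k ≠ i → k ≠ j → b k = 0) :
    False := by
  set P : Submodule ℂ (Fin 4 → ℂ) := span ℂ {Pi.single i 1, Pi.single j 1} with hP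
  have hliP : LinearIndependent ℂ ![(Pi.single i 1 : Fin 4 → ℂ), Pi.single j 1] := by
    rw [LinearIndependent.pair_iff]
    intro c d hcd
    have h1 := congrFun hcd i
    have h2 := congrFun hcd j
    simp [Pi.single_apply, hij, hij.symm] at h1 h2
    exact ⟨h1, h2⟩
  have memP : ∀ x : Fin 4 → ℂ, (∀ k, k ≠ i → k ≠ j → x k = 0) → x ∈ P := by
    intro x hx
    rw [hP, Submodule.mem_span_pair]
    refine ⟨x i, x j, ?_⟩
    funext k
    by_cases hk : k = i
    · subst hk; simp [Pi.single_apply, hij.symm]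
    by_cases hk2 : k = j
    · subst hk2; simp [Pi.single_apply, hij]
    · simp [Pi.single_apply, hk, hk2, hx k hk hk2]
  have hle : span ℂ ({a, b} : Set (Fin 4 → ℂ)) ≤ P := by
    rw [Submodule.span_le]
    rintro x hx
    simp only [Set.mem_insert_iff, Set.mem_singleton_iff] at hx
    rcases hx with rfl | rfl
    · exact memP _ ha
    · exact memP _ hb
  have heq : span ℂ ({a, b} : Set (Fin 4 → ℂ)) = P :=
    eq_of_le_of_finrank_le hle (by rw [finrank_span_pair hliP, finrank_span_pair hli])
  have hei : (Pi.single i 1 : Fin 4 → ℂ) ∈ span ℂ ({a, b} : Set (Fin 4 → ℂ)) := by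
    rw [heq, hP]; exact Submodule.subset_span (by simp)
  rw [Submodule.mem_span_pair] at hei
  obtain ⟨c, d, hcd⟩ := hei
  have := hF c d
  rw [hcd, quarticF_single] at this
  exact hA this

lemma supp03 {x : Fin 4 → ℂ} (h1 : x 1 = 0) (h2 : x 2 = 0) :
    ∀ k, k ≠ (0 : Fin 4) → k ≠ 3 → x k = 0 := by
  intro k hk0 hk3
  fin_cases k
  · exact absurd rfl hk0
  · exact h1
  · exact h2
  · exact absurd rfl hk3
lemma supp02 {x : Fin 4 → ℂ} (h1 : x 1 = 0) (h3 : x 3 = 0) :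
    ∀ k, k ≠ (0 : Fin 4) → k ≠ 2 → x k = 0 := by
  intro k hk0 hk2
  fin_cases k
  · exact absurd rfl hk0
  · exact h1
  · exact absurd rfl hk2
  · exact h3
lemma supp13 {x : Fin 4 → ℂ} (h0 : x 0 = 0) (h2 : x 2 = 0) :
    ∀ k, k ≠ (1 : Fin 4) → k ≠ 3 → x k = 0 := by
  intro k hk1 hk3
  fin_cases k
  · exact h0
  · exact absurd rfl hk1
  · exact h2
  · exact absurd rfl hk3

lemma quarticF_apply (A B C D E x y z w : ℂ) :
    quarticF A B C D E ![x, y, z, w] = A * (x ^ 4 + y ^ 4 + z ^ 4 + w ^ 4) + B * (x * y * z * w)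
      + C * (x ^ 2 * y ^ 2 + z ^ 2 * w ^ 2) + D * (x ^ 2 * z ^ 2 + y ^ 2 * w ^ 2)
      + E * (x ^ 2 * w ^ 2 + y ^ 2 * z ^ 2) := by
  simp [quarticF]

lemma ruling1 (A B C D E : ℂ) (hA : A ≠ 0) (W : Submodule ℂ (Fin 4 → ℂ))
    (hrank : Module.finrank ℂ W = 2) {a b : Fin 4 → ℂ}
    (hli : LinearIndependent ℂ ![a, b]) (hW : W = span ℂ ({a, b} : Set (Fin 4 → ℂ)))
    (hF : ∀ v ∈ W, quarticF A B C D E v = 0)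
    (hQ1 : a 0 * a 1 + a 2 * a 3 = 0) (hQ2 : b 0 * b 1 + b 2 * b 3 = 0)
    (hQ3 : a 0 * b 1 + a 1 * b 0 + a 2 * b 3 + a 3 * b 2 = 0)
    (hm1 : a 1 * b 2 - a 2 * b 1 = 0) (hd3 : a 0 * b 3 - a 3 * b 0 = 0) :
    ∃ s, A * s ^ 4 + E * s ^ 2 + A = 0 ∧ W = L1 s := by
  have hFab : ∀ c d : ℂ, quarticF A B C D E (c • a + d • b) = 0 := by
    intro c d
    apply hF
    rw [hW]
    exact add_mem (smul_mem _ _ (subset_span (by simp))) (smul_mem _ _ (subset_span (by simp)))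
  have hmu : a 1 * b 0 + a 2 * b 3 = 0 := by
    by_contra hmu
    have h0 : a 0 * (a 1 * b 0 + a 2 * b 3) = 0 := by linear_combination a 2 * hd3 + b 0 * hQ1
    have h3 : a 3 * (a 1 * b 0 + a 2 * b 3) = 0 := by linear_combination b 3 * hQ1 - a 1 * hd3
    have ha0 : a 0 = 0 := by rcases mul_eq_zero.mp h0 with h | h; exacts [h, absurd h hmu]
    have ha3 : a 3 = 0 := by rcases mul_eq_zero.mp h3 with h | h; exacts [h, absurd h hmu]
    exact hmu (by linear_combination hQ3 - b 1 * ha0 - b 2 * ha3)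
  have hmu' : a 0 * b 1 + a 3 * b 2 = 0 := by linear_combination hQ3 - hmu
  have build : ∀ s' : ℂ, a 0 = s' * a 3 → a 2 = -(s' * a 1) → b 0 = s' * b 3 →
      b 2 = -(s' * b 1) → ∃ s, A * s ^ 4 + E * s ^ 2 + A = 0 ∧ W = L1 s := by
    intro s' h1 h2 h3 h4
    have hle : W ≤ L1 s' := by
      rw [hW, span_le]
      rintro x hx
      simp only [Set.mem_insert_iff, Set.mem_singleton_iff] at hx
      rcases hx with rfl | rfl
      · rw [SetLike.mem_coe, mem_L1]
        exact ⟨x 3, -(x 1), by funext i; fin_cases i <;> simp [h1, h2, mul_comm]⟩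
      · rw [SetLike.mem_coe, mem_L1]
        exact ⟨x 3, -(x 1), by funext i; fin_cases i <;> simp [h3, h4, mul_comm]⟩
    have hWL : W = L1 s' := by
      refine eq_of_le_of_finrank_le hle ?_
      rw [finrank_L1, hrank]
    have hmem : (![s', 0, 0, 1] : Fin 4 → ℂ) ∈ W := by
      rw [hWL, L1]; exact subset_span (by simp)
    have hq0 := hF _ hmem
    rw [quarticF_apply] at hq0
    exact ⟨s', by linear_combination hq0, hWL⟩
  by_cases ha1 : a 1 = 0
  · by_cases hb1 : b 1 = 0
    · exfalso
      have h23 : a 2 * a 3 = 0 := by linear_combination hQ1 - a 0 * ha1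
      have hb23 : b 2 * b 3 = 0 := by linear_combination hQ2 - b 0 * hb1
      have h33 : a 2 * b 3 + a 3 * b 2 = 0 := by linear_combination hQ3 - b 0 * ha1 - a 0 * hb1
      rcases mul_eq_zero.mp h23 with ha2 | ha3
      · rcases mul_eq_zero.mp hb23 with hb2 | hb3
        · exact degenerate_contra A B C D E hA hli hFab 0 3 (by decide)
            (supp03 ha1 ha2) (supp03 hb1 hb2)
        · have hz : a 3 * b 2 = 0 := by linear_combination h33 - b 3 * ha2
          rcases mul_eq_zero.mp hz with ha3 | hb2
          · exact degenerate_contra A B C D E hA hli hFab 0 2 (by decide)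
              (supp02 ha1 ha3) (supp02 hb1 hb3)
          · exact degenerate_contra A B C D E hA hli hFab 0 3 (by decide)
              (supp03 ha1 ha2) (supp03 hb1 hb2)
      · rcases mul_eq_zero.mp hb23 with hb2 | hb3
        · have hz : a 2 * b 3 = 0 := by linear_combination h33 - a 3 * hb2
          rcases mul_eq_zero.mp hz with ha2 | hb3
          · exact degenerate_contra A B C D E hA hli hFab 0 3 (by decide)
              (supp03 ha1 ha2) (supp03 hb1 hb2)
          · exact degenerate_contra A B C D E hA hli hFab 0 2 (by decide)
              (supp02 ha1 ha3) (supp02 hb1 hb3)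
        · exact degenerate_contra A B C D E hA hli hFab 0 2 (by decide)
            (supp02 ha1 ha3) (supp02 hb1 hb3)
    · -- a 1 = 0, b 1 ≠ 0
      have ha2 : a 2 = 0 := by
        have hz : a 2 * b 1 = 0 := by linear_combination b 2 * ha1 - hm1
        rcases mul_eq_zero.mp hz with h | h; exacts [h, absurd h hb1]
      refine build (-(b 2) / b 1) ?_ ?_ ?_ ?_
      · field_simp
        linear_combination hmu'
      · rw [ha1, ha2]; ring
      · field_simp
        linear_combination hQ2
      · field_simp
  · refine build (-(a 2) / a 1) ?_ ?_ ?_ ?_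
    · field_simp
      linear_combination hQ1
    · field_simp
    · field_simp
      linear_combination hmu
    · field_simp
      linear_combination hm1

lemma ruling2 (A B C D E : ℂ) (hA : A ≠ 0) (W : Submodule ℂ (Fin 4 → ℂ))
    (hrank : Module.finrank ℂ W = 2) {a b : Fin 4 → ℂ}
    (hli : LinearIndependent ℂ ![a, b]) (hW : W = span ℂ ({a, b} : Set (Fin 4 → ℂ)))
    (hF : ∀ v ∈ W, quarticF A B C D E v = 0)
    (hQ1 : a 0 * a 1 + a 2 * a 3 = 0) (hQ2 : b 0 * b 1 + b 2 * b 3 = 0)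
    (hQ3 : a 0 * b 1 + a 1 * b 0 + a 2 * b 3 + a 3 * b 2 = 0)
    (hd2 : a 0 * b 2 - a 2 * b 0 = 0) (he : a 1 * b 3 - a 3 * b 1 = 0) :
    ∃ u, A * u ^ 4 + D * u ^ 2 + A = 0 ∧ W = L2 u := by
  have hFab : ∀ c d : ℂ, quarticF A B C D E (c • a + d • b) = 0 := by
    intro c d
    apply hF
    rw [hW]
    exact add_mem (smul_mem _ _ (subset_span (by simp))) (smul_mem _ _ (subset_span (by simp)))
  have hg : a 0 * b 1 + a 2 * b 3 = 0 := by
    by_contra hg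
    have h0 : b 0 * (a 0 * b 1 + a 2 * b 3) = 0 := by linear_combination a 0 * hQ2 - b 3 * hd2
    have h2 : b 2 * (a 0 * b 1 + a 2 * b 3) = 0 := by linear_combination a 2 * hQ2 + b 1 * hd2
    have hb0 : b 0 = 0 := by rcases mul_eq_zero.mp h0 with h | h; exacts [h, absurd h hg]
    have hb2 : b 2 = 0 := by rcases mul_eq_zero.mp h2 with h | h; exacts [h, absurd h hg]
    exact hg (by linear_combination hQ3 - a 1 * hb0 - a 3 * hb2)
  have hg' : a 1 * b 0 + a 3 * b 2 = 0 := by linear_combination hQ3 - hg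
  have build : ∀ u' : ℂ, a 0 = u' * a 2 → a 3 = -(u' * a 1) → b 0 = u' * b 2 →
      b 3 = -(u' * b 1) → ∃ u, A * u ^ 4 + D * u ^ 2 + A = 0 ∧ W = L2 u := by
    intro u' h1 h2 h3 h4
    have hle : W ≤ L2 u' := by
      rw [hW, span_le]
      rintro x hx
      simp only [Set.mem_insert_iff, Set.mem_singleton_iff] at hx
      rcases hx with rfl | rfl
      · rw [SetLike.mem_coe, mem_L2]
        exact ⟨x 2, -(x 1), by funext i; fin_cases i <;> simp [h1, h2, mul_comm]⟩
      · rw [SetLike.mem_coe, mem_L2]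
        exact ⟨x 2, -(x 1), by funext i; fin_cases i <;> simp [h3, h4, mul_comm]⟩
    have hWL : W = L2 u' := by
      refine eq_of_le_of_finrank_le hle ?_
      rw [finrank_L2, hrank]
    have hmem : (![u', 0, 1, 0] : Fin 4 → ℂ) ∈ W := by
      rw [hWL, L2]; exact subset_span (by simp)
    have hq0 := hF _ hmem
    rw [quarticF_apply] at hq0
    exact ⟨u', by linear_combination hq0, hWL⟩
  by_cases ha2 : a 2 = 0
  · by_cases hb2 : b 2 = 0
    · exfalso
      have h01 : a 0 * a 1 = 0 := by linear_combination hQ1 - a 3 * ha2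
      have hb01 : b 0 * b 1 = 0 := by linear_combination hQ2 - b 3 * hb2
      have h33 : a 0 * b 1 + a 1 * b 0 = 0 := by linear_combination hQ3 - b 3 * ha2 - a 3 * hb2
      rcases mul_eq_zero.mp h01 with ha0 | ha1
      · rcases mul_eq_zero.mp hb01 with hb0 | hb1
        · exact degenerate_contra A B C D E hA hli hFab 1 3 (by decide)
            (supp13 ha0 ha2) (supp13 hb0 hb2)
        · have hz : a 1 * b 0 = 0 := by linear_combination h33 - b 1 * ha0
          rcases mul_eq_zero.mp hz with ha1 | hb0
          · exact degenerate_contra A B C D E hA hli hFab 0 3 (by decide)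
              (supp03 ha1 ha2) (supp03 hb1 hb2)
          · exact degenerate_contra A B C D E hA hli hFab 1 3 (by decide)
              (supp13 ha0 ha2) (supp13 hb0 hb2)
      · rcases mul_eq_zero.mp hb01 with hb0 | hb1
        · have hz : a 0 * b 1 = 0 := by linear_combination h33 - a 1 * hb0
          rcases mul_eq_zero.mp hz with ha0 | hb1
          · exact degenerate_contra A B C D E hA hli hFab 1 3 (by decide)
              (supp13 ha0 ha2) (supp13 hb0 hb2)
          · exact degenerate_contra A B C D E hA hli hFab 0 3 (by decide)
              (supp03 ha1 ha2) (supp03 hb1 hb2)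
        · exact degenerate_contra A B C D E hA hli hFab 0 3 (by decide)
            (supp03 ha1 ha2) (supp03 hb1 hb2)
    · have ha0 : a 0 = 0 := by
        have hz : a 0 * b 2 = 0 := by linear_combination hd2 + b 0 * ha2
        rcases mul_eq_zero.mp hz with h | h; exacts [h, absurd h hb2]
      refine build (b 0 / b 2) ?_ ?_ ?_ ?_
      · rw [ha0, ha2]; ring
      · field_simp
        linear_combination hg'
      · field_simp
      · field_simp
        linear_combination hQ2
  · refine build (a 0 / a 2) ?_ ?_ ?_ ?_
    · field_simp
    · field_simp
      linear_combination hQ1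
    · field_simp
      linear_combination -hd2
    · field_simp
      linear_combination hg

lemma forward (A B C D E : ℂ) (hA : A ≠ 0) (W : Submodule ℂ (Fin 4 → ℂ))
    (hrank : Module.finrank ℂ W = 2)
    (hq : ∀ v ∈ W, v 0 * v 1 + v 2 * v 3 = 0)
    (hF : ∀ v ∈ W, quarticF A B C D E v = 0) :
    (∃ s, A * s ^ 4 + E * s ^ 2 + A = 0 ∧ W = L1 s) ∨
    (∃ u, A * u ^ 4 + D * u ^ 2 + A = 0 ∧ W = L2 u) := by
  let Bs : Module.Basis (Fin 2) ℂ W := Module.finBasisOfFinrankEq ℂ ↥W hrank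
  set a : Fin 4 → ℂ := (Bs 0 : Fin 4 → ℂ) with hadef
  set b : Fin 4 → ℂ := (Bs 1 : Fin 4 → ℂ) with hbdef
  have hli0 : LinearIndependent ℂ (W.subtype ∘ Bs) :=
    Bs.linearIndependent.map' W.subtype (Submodule.ker_subtype W)
  have hli : LinearIndependent ℂ ![a, b] := by
    have heq : ![a, b] = W.subtype ∘ Bs := by
      funext i; fin_cases i <;> rfl
    rw [heq]; exact hli0
  have haW : a ∈ W := (Bs 0).2
  have hbW : b ∈ W := (Bs 1).2
  have hW : W = span ℂ ({a, b} : Set (Fin 4 → ℂ)) := by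
    refine (eq_of_le_of_finrank_le ?_ ?_).symm
    · rw [span_le]
      rintro x hx
      simp only [Set.mem_insert_iff, Set.mem_singleton_iff] at hx
      rcases hx with rfl | rfl
      exacts [haW, hbW]
    · rw [hrank, finrank_span_pair hli]
  have hQ1 := hq a haW
  have hQ2 := hq b hbW
  have hQ3 : a 0 * b 1 + a 1 * b 0 + a 2 * b 3 + a 3 * b 2 = 0 := by
    have h := hq (a + b) (add_mem haW hbW)
    simp only [Pi.add_apply] at h
    linear_combination h - hQ1 - hQ2
  by_cases hd2 : a 0 * b 2 - a 2 * b 0 = 0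
  · by_cases he : a 1 * b 3 - a 3 * b 1 = 0
    · exact Or.inr (ruling2 A B C D E hA W hrank hli hW hF hQ1 hQ2 hQ3 hd2 he)
    · have hm1 : a 1 * b 2 - a 2 * b 1 = 0 := by
        have hp : (a 1 * b 3 - a 3 * b 1) * (a 1 * b 2 - a 2 * b 1) = 0 := by
          linear_combination (b 1) ^ 2 * hQ1 + (a 1) ^ 2 * hQ2 - a 1 * b 1 * hQ3
        rcases mul_eq_zero.mp hp with h | h; exacts [absurd h he, h]
      have hd3 : a 0 * b 3 - a 3 * b 0 = 0 := by
        have hp : (a 1 * b 3 - a 3 * b 1) * (a 0 * b 3 - a 3 * b 0) = 0 := by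
          linear_combination (b 3) ^ 2 * hQ1 + (a 3) ^ 2 * hQ2 - a 3 * b 3 * hQ3
        rcases mul_eq_zero.mp hp with h | h; exacts [absurd h he, h]
      exact Or.inl (ruling1 A B C D E hA W hrank hli hW hF hQ1 hQ2 hQ3 hm1 hd3)
  · have hd3 : a 0 * b 3 - a 3 * b 0 = 0 := by
      have hp : (a 0 * b 2 - a 2 * b 0) * (a 0 * b 3 - a 3 * b 0) = 0 := by
        linear_combination (b 0) ^ 2 * hQ1 + (a 0) ^ 2 * hQ2 - a 0 * b 0 * hQ3
      rcases mul_eq_zero.mp hp with h | h; exacts [absurd h hd2, h]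
    have hm1 : a 1 * b 2 - a 2 * b 1 = 0 := by
      have hp : (a 0 * b 2 - a 2 * b 0) * (a 1 * b 2 - a 2 * b 1) = 0 := by
        linear_combination (b 2) ^ 2 * hQ1 + (a 2) ^ 2 * hQ2 - a 2 * b 2 * hQ3
      rcases mul_eq_zero.mp hp with h | h; exacts [absurd h hd2, h]
    exact Or.inl (ruling1 A B C D E hA W hrank hli hW hF hQ1 hQ2 hQ3 hm1 hd3)

lemma L1_sat (A B C D E s : ℂ) (hA : A ≠ 0) (h : A * B - 2 * A * C + D * E = 0)
    (hroot : A * s ^ 4 + E * s ^ 2 + A = 0) :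
    Module.finrank ℂ (L1 s) = 2 ∧ (∀ v ∈ L1 s, v 0 * v 1 + v 2 * v 3 = 0) ∧
      ∀ v ∈ L1 s, quarticF A B C D E v = 0 := by
  refine ⟨finrank_L1 s, ?_, ?_⟩
  · intro v hv
    rw [mem_L1] at hv
    obtain ⟨m, n, rfl⟩ := hv
    simp
    ring
  · intro v hv
    rw [mem_L1] at hv
    obtain ⟨m, n, rfl⟩ := hv
    have key : A * quarticF A B C D E ![m * s, -n, n * s, m] = 0 := by
      rw [quarticF_apply]
      linear_combination (A * (m ^ 4 + n ^ 4) + D * m ^ 2 * n ^ 2) * hroot - s ^ 2 * m ^ 2 * n ^ 2 * h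
    rcases mul_eq_zero.mp key with h' | h'
    · exact absurd h' hA
    · exact h'

lemma L2_sat (A B C D E u : ℂ) (hA : A ≠ 0) (h : A * B - 2 * A * C + D * E = 0)
    (hroot : A * u ^ 4 + D * u ^ 2 + A = 0) :
    Module.finrank ℂ (L2 u) = 2 ∧ (∀ v ∈ L2 u, v 0 * v 1 + v 2 * v 3 = 0) ∧
      ∀ v ∈ L2 u, quarticF A B C D E v = 0 := by
  refine ⟨finrank_L2 u, ?_, ?_⟩
  · intro v hv
    rw [mem_L2] at hv
    obtain ⟨m, n, rfl⟩ := hv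
    simp
    ring
  · intro v hv
    rw [mem_L2] at hv
    obtain ⟨m, n, rfl⟩ := hv
    have key : A * quarticF A B C D E ![m * u, -n, m, n * u] = 0 := by
      rw [quarticF_apply]
      linear_combination (A * (m ^ 4 + n ^ 4) + E * m ^ 2 * n ^ 2) * hroot - u ^ 2 * m ^ 2 * n ^ 2 * h
    rcases mul_eq_zero.mp key with h' | h'
    · exact absurd h' hA
    · exact h'

lemma ncard_eight {α : Type*} {x1 x2 x3 x4 x5 x6 x7 x8 : α}
    (h12 : x1 ≠ x2) (h13 : x1 ≠ x3) (h14 : x1 ≠ x4) (h15 : x1 ≠ x5) (h16 : x1 ≠ x6)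
    (h17 : x1 ≠ x7) (h18 : x1 ≠ x8)
    (h23 : x2 ≠ x3) (h24 : x2 ≠ x4) (h25 : x2 ≠ x5) (h26 : x2 ≠ x6) (h27 : x2 ≠ x7)
    (h28 : x2 ≠ x8)
    (h34 : x3 ≠ x4) (h35 : x3 ≠ x5) (h36 : x3 ≠ x6) (h37 : x3 ≠ x7) (h38 : x3 ≠ x8)
    (h45 : x4 ≠ x5) (h46 : x4 ≠ x6) (h47 : x4 ≠ x7) (h48 : x4 ≠ x8)
    (h56 : x5 ≠ x6) (h57 : x5 ≠ x7) (h58 : x5 ≠ x8)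
    (h67 : x6 ≠ x7) (h68 : x6 ≠ x8)
    (h78 : x7 ≠ x8) :
    ({x1, x2, x3, x4, x5, x6, x7, x8} : Set α).ncard = 8 := by
  have f8 : ({x8} : Set α).Finite := Set.finite_singleton _
  have f7 : ({x7, x8} : Set α).Finite := f8.insert _
  have f6 : ({x6, x7, x8} : Set α).Finite := f7.insert _
  have f5 : ({x5, x6, x7, x8} : Set α).Finite := f6.insert _
  have f4 : ({x4, x5, x6, x7, x8} : Set α).Finite := f5.insert _
  have f3 : ({x3, x4, x5, x6, x7, x8} : Set α).Finite := f4.insert _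
  have f2 : ({x2, x3, x4, x5, x6, x7, x8} : Set α).Finite := f3.insert _
  rw [Set.ncard_insert_of_notMem (by simp [h12, h13, h14, h15, h16, h17, h18]) f2,
    Set.ncard_insert_of_notMem (by simp [h23, h24, h25, h26, h27, h28]) f3,
    Set.ncard_insert_of_notMem (by simp [h34, h35, h36, h37, h38]) f4,
    Set.ncard_insert_of_notMem (by simp [h45, h46, h47, h48]) f5,
    Set.ncard_insert_of_notMem (by simp [h56, h57, h58]) f6,
    Set.ncard_insert_of_notMem (by simp [h67, h68]) f7,
    Set.ncard_insert_of_notMem (by simp [h78]) f8,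
    Set.ncard_singleton]

lemma roots_pack (A T : ℂ) (hA : A ≠ 0) (hT : T ^ 2 ≠ 4 * A ^ 2) :
    ∃ s1 s2 : ℂ, (A * s1 ^ 4 + T * s1 ^ 2 + A = 0) ∧ (A * s2 ^ 4 + T * s2 ^ 2 + A = 0) ∧
      s1 ≠ 0 ∧ s2 ≠ 0 ∧ s1 ^ 2 ≠ s2 ^ 2 ∧
      (∀ x, A * x ^ 4 + T * x ^ 2 + A = 0 → x = s1 ∨ x = -s1 ∨ x = s2 ∨ x = -s2) := by
  obtain ⟨e, he⟩ := IsAlgClosed.exists_pow_nat_eq (T ^ 2 - 4 * A ^ 2) (n := 2) (by norm_num)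
  obtain ⟨s1, hs1⟩ := IsAlgClosed.exists_pow_nat_eq ((-T + e) / (2 * A)) (n := 2) (by norm_num)
  obtain ⟨s2, hs2⟩ := IsAlgClosed.exists_pow_nat_eq ((-T - e) / (2 * A)) (n := 2) (by norm_num)
  have h2A : (2 : ℂ) * A ≠ 0 := mul_ne_zero two_ne_zero hA
  have h1 : 2 * A * s1 ^ 2 = -T + e := by rw [hs1]; field_simp
  have h2 : 2 * A * s2 ^ 2 = -T - e := by rw [hs2]; field_simp
  have he0 : e ≠ 0 := by
    intro h0
    apply hT
    rw [h0] at he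
    linear_combination -he
  have hprod : s1 ^ 2 * s2 ^ 2 = 1 := by
    have hm : (2 * A) * ((2 * A) * (s1 ^ 2 * s2 ^ 2)) = (2 * A) * ((2 * A) * 1) := by
      linear_combination (2 * A * s2 ^ 2) * h1 + (-T + e) * h2 - he
    exact mul_left_cancel₀ h2A (mul_left_cancel₀ h2A hm)
  have hsum : A * s1 ^ 2 + A * s2 ^ 2 = -T := by
    have hm : 2 * (A * s1 ^ 2 + A * s2 ^ 2) = 2 * (-T) := by linear_combination h1 + h2
    exact mul_left_cancel₀ two_ne_zero hm
  have hs1ne : s1 ≠ 0 := by intro h0; rw [h0] at hprod; simp at hprod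
  have hs2ne : s2 ≠ 0 := by intro h0; rw [h0] at hprod; simp at hprod
  have hsqne : s1 ^ 2 ≠ s2 ^ 2 := by
    intro hq
    apply he0
    have hm : 2 * e = 2 * 0 := by linear_combination -h1 + h2 + 2 * A * hq
    exact mul_left_cancel₀ two_ne_zero hm
  refine ⟨s1, s2, by linear_combination s1 ^ 2 * hsum + (-A) * hprod,
    by linear_combination s2 ^ 2 * hsum + (-A) * hprod, hs1ne, hs2ne, hsqne, ?_⟩
  intro x hx
  have hfac : A * ((x - s1) * (x + s1) * ((x - s2) * (x + s2))) = 0 := by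
    linear_combination hx - x ^ 2 * hsum + A * hprod
  rcases mul_eq_zero.mp hfac with h' | h'
  · exact absurd h' hA
  rcases mul_eq_zero.mp h' with h'' | h''
  · rcases mul_eq_zero.mp h'' with h3 | h3
    · exact Or.inl (sub_eq_zero.mp h3)
    · exact Or.inr (Or.inl (eq_neg_of_add_eq_zero_left h3))
  · rcases mul_eq_zero.mp h'' with h3 | h3
    · exact Or.inr (Or.inr (Or.inl (sub_eq_zero.mp h3)))
    · exact Or.inr (Or.inr (Or.inr (eq_neg_of_add_eq_zero_left h3)))

lemma neg_ne_self {x : ℂ} (hx : x ≠ 0) : x ≠ -x := by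
  intro hxx
  apply hx
  have h2 : 2 * x = 2 * 0 := by linear_combination hxx
  exact mul_left_cancel₀ two_ne_zero h2

lemma sq_ne_all {x y : ℂ} (hxy : x ^ 2 ≠ y ^ 2) :
    x ≠ y ∧ x ≠ -y ∧ -x ≠ y ∧ -x ≠ -y := by
  refine ⟨fun hh => hxy (by rw [hh]), fun hh => hxy (by rw [hh]; ring),
    fun hh => hxy (by rw [← hh]; ring), fun hh => hxy (by rw [neg_inj.mp hh])⟩

end EightLines


/-- If `AB − 2AC + DE = 0`, `A ≠ 0`, `D² ≠ 4A²` and `E² ≠ 4A²`, then the surface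
`X_{A,B,C,D,E}` contains exactly eight lines lying on the quadric
`Q₆ = {xy + zw = 0} ⊂ ℙ³(ℂ)`: there are exactly eight 2-dimensional `ℂ`-linear
subspaces of `ℂ⁴` on which both `xy + zw` and `F_{A,B,C,D,E}` vanish identically. -/
theorem eight_lines_on_quadric (A B C D E : ℂ)
    (h : A * B - 2 * A * C + D * E = 0) (hA : A ≠ 0)
    (hD : D ^ 2 ≠ 4 * A ^ 2) (hE : E ^ 2 ≠ 4 * A ^ 2) :
    {W : Submodule ℂ (Fin 4 → ℂ) | Module.finrank ℂ W = 2 ∧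
      (∀ v ∈ W, v 0 * v 1 + v 2 * v 3 = 0) ∧
      ∀ v ∈ W, quarticF A B C D E v = 0}.ncard = 8 := by
  classical
  open EightLines in
  obtain ⟨s1, s2, hE1, hE2, hs1ne, hs2ne, hsEne, hrootsE⟩ := roots_pack A E hA hE
  obtain ⟨r1, r2, hD1, hD2, hr1ne, hr2ne, hsDne, hrootsD⟩ := roots_pack A D hA hD
  have hE1' : A * (-s1) ^ 4 + E * (-s1) ^ 2 + A = 0 := by linear_combination hE1
  have hE2' : A * (-s2) ^ 4 + E * (-s2) ^ 2 + A = 0 := by linear_combination hE2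
  have hD1' : A * (-r1) ^ 4 + D * (-r1) ^ 2 + A = 0 := by linear_combination hD1
  have hD2' : A * (-r2) ^ 4 + D * (-r2) ^ 2 + A = 0 := by linear_combination hD2
  have hset : {W : Submodule ℂ (Fin 4 → ℂ) | Module.finrank ℂ W = 2 ∧
      (∀ v ∈ W, v 0 * v 1 + v 2 * v 3 = 0) ∧
      ∀ v ∈ W, quarticF A B C D E v = 0} =
      {L1 s1, L1 (-s1), L1 s2, L1 (-s2), L2 r1, L2 (-r1), L2 r2, L2 (-r2)} := by
    ext W
    simp only [Set.mem_setOf_eq, Set.mem_insert_iff, Set.mem_singleton_iff]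
    constructor
    · rintro ⟨h1, h2, h3⟩
      rcases forward A B C D E hA W h1 h2 h3 with ⟨s, hs, rfl⟩ | ⟨u, hu, rfl⟩
      · rcases hrootsE s hs with rfl | rfl | rfl | rfl
        · exact Or.inl rfl
        · exact Or.inr (Or.inl rfl)
        · exact Or.inr (Or.inr (Or.inl rfl))
        · exact Or.inr (Or.inr (Or.inr (Or.inl rfl)))
      · rcases hrootsD u hu with rfl | rfl | rfl | rfl
        · exact Or.inr (Or.inr (Or.inr (Or.inr (Or.inl rfl))))
        · exact Or.inr (Or.inr (Or.inr (Or.inr (Or.inr (Or.inl rfl)))))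
        · exact Or.inr (Or.inr (Or.inr (Or.inr (Or.inr (Or.inr (Or.inl rfl))))))
        · exact Or.inr (Or.inr (Or.inr (Or.inr (Or.inr (Or.inr (Or.inr rfl))))))
    · rintro (rfl | rfl | rfl | rfl | rfl | rfl | rfl | rfl)
      · exact L1_sat A B C D E s1 hA h hE1
      · exact L1_sat A B C D E (-s1) hA h hE1'
      · exact L1_sat A B C D E s2 hA h hE2
      · exact L1_sat A B C D E (-s2) hA h hE2'
      · exact L2_sat A B C D E r1 hA h hD1
      · exact L2_sat A B C D E (-r1) hA h hD1'
      · exact L2_sat A B C D E r2 hA h hD2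
      · exact L2_sat A B C D E (-r2) hA h hD2'
  rw [hset]
  obtain ⟨e12, e13, e23, e24⟩ := sq_ne_all hsEne
  obtain ⟨d12, d13, d23, d24⟩ := sq_ne_all hsDne
  have hL1 : ∀ {x y : ℂ}, x ≠ y → L1 x ≠ L1 y := fun hxy hL => hxy (L1_inj hL)
  have hL2 : ∀ {x y : ℂ}, x ≠ y → L2 x ≠ L2 y := fun hxy hL => hxy (L2_inj hL)
  have hr1ne' : -r1 ≠ 0 := neg_ne_zero.mpr hr1ne
  have hr2ne' : -r2 ≠ 0 := neg_ne_zero.mpr hr2ne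
  exact ncard_eight
    (hL1 (neg_ne_self hs1ne)) (hL1 e12) (hL1 e13)
    (L1_ne_L2 hr1ne) (L1_ne_L2 hr1ne') (L1_ne_L2 hr2ne) (L1_ne_L2 hr2ne')
    (hL1 e23) (hL1 e24)
    (L1_ne_L2 hr1ne) (L1_ne_L2 hr1ne') (L1_ne_L2 hr2ne) (L1_ne_L2 hr2ne')
    (hL1 (neg_ne_self hs2ne))
    (L1_ne_L2 hr1ne) (L1_ne_L2 hr1ne') (L1_ne_L2 hr2ne) (L1_ne_L2 hr2ne')
    (L1_ne_L2 hr1ne) (L1_ne_L2 hr1ne') (L1_ne_L2 hr2ne) (L1_ne_L2 hr2ne')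
    (hL2 (neg_ne_self hr1ne)) (hL2 d12) (hL2 d13)
    (hL2 d23) (hL2 d24)
    (hL2 (neg_ne_self hr2ne))
end

section
/- Let A,C,D,E ∈ ℂ satisfy DE = 2AC, A ≠ 0, D² ≠ 4A² and E² ≠ 4A², and set B = 0. Then there are exactly eight 2-dimensional ℂ-linear subspaces W of ℂ⁴ on which both xy − zw and F_{A,0,C,D,E} vanish identically, exactly eight on which both xy + zw and F_{A,0,C,D,E} vanish identically, and no such W lies in both collections; consequently the surface X_{A,0,C,D,E} contains at least sixteen lines. -/
/-- The set of lines (2-dimensional linear subspaces of `ℂ⁴`) lying on the surface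
`{F_{A,0,C,D,E} = 0}` and on the quadric `Q₅ = {xy − zw = 0}`. -/
def linesOnQ₅ (A C D E : ℂ) : Set (Submodule ℂ (Fin 4 → ℂ)) :=
  {W | Module.finrank ℂ W = 2 ∧ (∀ v ∈ W, v 0 * v 1 - v 2 * v 3 = 0) ∧
    ∀ v ∈ W, quarticF A 0 C D E v = 0}

/-- The set of lines (2-dimensional linear subspaces of `ℂ⁴`) lying on the surface
`{F_{A,0,C,D,E} = 0}` and on the quadric `Q₆ = {xy + zw = 0}`. -/
def linesOnQ₆ (A C D E : ℂ) : Set (Submodule ℂ (Fin 4 → ℂ)) :=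
  {W | Module.finrank ℂ W = 2 ∧ (∀ v ∈ W, v 0 * v 1 + v 2 * v 3 = 0) ∧
    ∀ v ∈ W, quarticF A 0 C D E v = 0}

noncomputable def lineL (s : ℂ) : Submodule ℂ (Fin 4 → ℂ) := Submodule.span ℂ {![s,0,0,1], ![0,1,s,0]}
noncomputable def lineM (u : ℂ) : Submodule ℂ (Fin 4 → ℂ) := Submodule.span ℂ {![u,0,1,0], ![0,1,0,u]}

lemma mem_lineL {s : ℂ} {v : Fin 4 → ℂ} : v ∈ lineL s ↔ ∃ x y : ℂ, v = ![x*s, y, y*s, x] := by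
  rw [lineL, Submodule.mem_span_pair]
  constructor
  · rintro ⟨x, y, rfl⟩
    exact ⟨x, y, by funext i; fin_cases i <;> simp⟩
  · rintro ⟨x, y, rfl⟩
    exact ⟨x, y, by funext i; fin_cases i <;> simp⟩

lemma mem_lineM {u : ℂ} {v : Fin 4 → ℂ} : v ∈ lineM u ↔ ∃ x y : ℂ, v = ![x*u, y, x, y*u] := by
  rw [lineM, Submodule.mem_span_pair]
  constructor
  · rintro ⟨x, y, rfl⟩
    exact ⟨x, y, by funext i; fin_cases i <;> simp⟩
  · rintro ⟨x, y, rfl⟩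
    exact ⟨x, y, by funext i; fin_cases i <;> simp⟩

lemma li_of_coords {a b : Fin 4 → ℂ} {i j : Fin 4} (hai : a i = 1) (haj : a j = 0)
    (hbi : b i = 0) (hbj : b j = 1) : LinearIndependent ℂ ![a, b] := by
  rw [LinearIndependent.pair_iff]
  intro x y hxy
  constructor
  · simpa [hai, hbi] using congrFun hxy i
  · simpa [haj, hbj] using congrFun hxy j

lemma finrank_span_pair {a b : Fin 4 → ℂ} (h : LinearIndependent ℂ ![a, b]) :
    Module.finrank ℂ (Submodule.span ℂ {a, b} : Submodule ℂ (Fin 4 → ℂ)) = 2 := by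
  have hr : ({a, b} : Set (Fin 4 → ℂ)) = Set.range ![a, b] := by
    simp [Matrix.range_cons, Matrix.range_empty, Set.pair_comm]
  rw [hr]
  simpa using finrank_span_eq_card h

lemma finrank_lineL (s : ℂ) : Module.finrank ℂ (lineL s) = 2 :=
  finrank_span_pair (li_of_coords (i := 3) (j := 1) (by simp) (by simp) (by simp) (by simp))

lemma finrank_lineM (u : ℂ) : Module.finrank ℂ (lineM u) = 2 :=
  finrank_span_pair (li_of_coords (i := 2) (j := 1) (by simp) (by simp) (by simp) (by simp))

lemma classifyQ5 {W : Submodule ℂ (Fin 4 → ℂ)} (h2 : Module.finrank ℂ W = 2)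
    (hq : ∀ v ∈ W, v 0 * v 1 - v 2 * v 3 = 0) :
    (∃ s, W = lineL s) ∨ (∃ u, W = lineM u) ∨
      W = Submodule.span ℂ {![1,0,0,0], ![0,0,0,1]} ∨
      W = Submodule.span ℂ {![1,0,0,0], ![0,0,1,0]} := by
  have hpol : ∀ u ∈ W, ∀ v ∈ W, u 0 * v 1 + u 1 * v 0 - u 2 * v 3 - u 3 * v 2 = 0 := by
    intro u hu v hv
    have e1 := hq u hu
    have e2 := hq v hv
    have e3 := hq (u + v) (W.add_mem hu hv)
    simp only [Pi.add_apply] at e3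
    linear_combination e3 - e1 - e2
  by_cases hall : ∀ v ∈ W, v 1 = 0
  · have hprod : ∀ v ∈ W, v 2 * v 3 = 0 := by
      intro v hv
      linear_combination v 0 * (hall v hv) - hq v hv
    by_cases hc2 : ∀ v ∈ W, v 2 = 0
    · right; right; left
      refine Submodule.eq_of_le_of_finrank_le ?_ ?_
      · intro v hv
        rw [Submodule.mem_span_pair]
        refine ⟨v 0, v 3, funext fun i => ?_⟩
        fin_cases i <;> simp [hall v hv, hc2 v hv]
      · rw [h2, finrank_span_pair (li_of_coords (i := 0) (j := 3)
          (by simp) (by simp) (by simp) (by simp))]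
    · push_neg at hc2
      obtain ⟨b, hbW, hb2⟩ := hc2
      have hb3 : b 3 = 0 := by
        rcases mul_eq_zero.1 (hprod b hbW) with h | h
        · exact absurd h hb2
        · exact h
      have hc3 : ∀ v ∈ W, v 3 = 0 := by
        intro v hv
        by_contra hv3
        have hv2 : v 2 = 0 := by
          rcases mul_eq_zero.1 (hprod v hv) with h | h
          · exact h
          · exact absurd h hv3
        have hx := hprod (b + v) (W.add_mem hbW hv)
        simp only [Pi.add_apply, hb3, hv2, add_zero, zero_add] at hx
        rcases mul_eq_zero.1 hx with h | h
        · exact hb2 h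
        · exact hv3 h
      right; right; right
      refine Submodule.eq_of_le_of_finrank_le ?_ ?_
      · intro v hv
        rw [Submodule.mem_span_pair]
        refine ⟨v 0, v 2, funext fun i => ?_⟩
        fin_cases i <;> simp [hall v hv, hc3 v hv]
      · rw [h2, finrank_span_pair (li_of_coords (i := 0) (j := 2)
          (by simp) (by simp) (by simp) (by simp))]
  · push_neg at hall
    obtain ⟨a₀, ha₀W, ha₀1⟩ := hall
    set a : Fin 4 → ℂ := (a₀ 1)⁻¹ • a₀ with hadef
    have haW : a ∈ W := W.smul_mem _ ha₀W
    have ha1 : a 1 = 1 := by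
      simp [hadef, inv_mul_cancel₀ ha₀1]
    have hans : ¬ (W ≤ Submodule.span ℂ {a}) := by
      intro hle
      have hfin : Module.finrank ℂ (Submodule.span ℂ {a} : Submodule ℂ (Fin 4 → ℂ)) = 1 :=
        finrank_span_singleton (by intro h0; rw [h0] at ha1; simp at ha1)
      have := Submodule.finrank_mono hle
      rw [h2, hfin] at this
      omega
    obtain ⟨w, hwW, hw⟩ := SetLike.not_le_iff_exists.1 hans
    set b : Fin 4 → ℂ := w - (w 1) • a with hbdef
    have hbW : b ∈ W := W.sub_mem hwW (W.smul_mem _ haW)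
    have hb1 : b 1 = 0 := by simp [hbdef, ha1]
    have hbne : b ≠ 0 := by
      intro h0
      apply hw
      have hwa : w = (w 1) • a := by
        have := sub_eq_zero.1 h0
        simpa [hbdef] using this
      rw [hwa]
      exact Submodule.smul_mem _ _ (Submodule.mem_span_singleton_self a)
    have hqa := hq a haW
    rw [ha1, mul_one] at hqa
    have ha0 : a 0 = a 2 * a 3 := by linear_combination hqa
    have hb23 : b 2 * b 3 = 0 := by
      have := hq b hbW
      rw [hb1, mul_zero] at this
      linear_combination -this
    by_cases hb3 : b 3 = 0
    · by_cases hb2 : b 2 = 0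
      · exfalso
        apply hbne
        have hpab := hpol a haW b hbW
        rw [ha1, hb1, hb2, hb3] at hpab
        have hb0 : b 0 = 0 := by linear_combination hpab
        funext i
        fin_cases i <;> simp [hb0, hb1, hb2, hb3]
      · -- W = lineM (a 3)
        right; left
        refine ⟨a 3, ?_⟩
        set c : Fin 4 → ℂ := (b 2)⁻¹ • b with hcdef
        have hcW : c ∈ W := W.smul_mem _ hbW
        have hc1 : c 1 = 0 := by simp [hcdef, hb1]
        have hc2 : c 2 = 1 := by simp [hcdef, inv_mul_cancel₀ hb2]
        have hc3 : c 3 = 0 := by simp [hcdef, hb3]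
        have hpac := hpol a haW c hcW
        rw [ha1, hc1, hc2, hc3] at hpac
        have hc0 : c 0 = a 3 := by linear_combination hpac
        refine (Submodule.eq_of_le_of_finrank_le ?_ ?_).symm
        · rw [lineM, Submodule.span_le]
          rintro x (rfl | rfl)
          · have : (![a 3, 0, 1, 0] : Fin 4 → ℂ) = c := by
              funext i; fin_cases i <;> simp [hc0, hc1, hc2, hc3]
            rw [this]; exact hcW
          · have : (![0, 1, 0, a 3] : Fin 4 → ℂ) = a - (a 2) • c := by
              funext i
              fin_cases i <;>
                simp [Pi.sub_apply, hc0, hc1, hc2, hc3, ha1, ha0] <;> ring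
            rw [this]; exact W.sub_mem haW (W.smul_mem _ hcW)
        · rw [h2, finrank_lineM]
    · have hb2 : b 2 = 0 := by
        rcases mul_eq_zero.1 hb23 with h | h
        · exact h
        · exact absurd h hb3
      -- W = lineL (a 2)
      left
      refine ⟨a 2, ?_⟩
      set c : Fin 4 → ℂ := (b 3)⁻¹ • b with hcdef
      have hcW : c ∈ W := W.smul_mem _ hbW
      have hc1 : c 1 = 0 := by simp [hcdef, hb1]
      have hc2 : c 2 = 0 := by simp [hcdef, hb2]
      have hc3 : c 3 = 1 := by simp [hcdef, inv_mul_cancel₀ hb3]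
      have hpac := hpol a haW c hcW
      rw [ha1, hc1, hc2, hc3] at hpac
      have hc0 : c 0 = a 2 := by linear_combination hpac
      refine (Submodule.eq_of_le_of_finrank_le ?_ ?_).symm
      · rw [lineL, Submodule.span_le]
        rintro x (rfl | rfl)
        · have : (![a 2, 0, 0, 1] : Fin 4 → ℂ) = c := by
            funext i; fin_cases i <;> simp [hc0, hc1, hc2, hc3]
          rw [this]; exact hcW
        · have : (![0, 1, a 2, 0] : Fin 4 → ℂ) = a - (a 3) • c := by
            funext i
            fin_cases i <;>
              simp [Pi.sub_apply, hc0, hc1, hc2, hc3, ha1, ha0] <;> ring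
          rw [this]; exact W.sub_mem haW (W.smul_mem _ hcW)
      · rw [h2, finrank_lineL]

lemma lineL_mem_Q5 {A C D E s : ℂ} (h : D * E = 2 * A * C) (hA : A ≠ 0)
    (hs : A * s ^ 4 + E * s ^ 2 + A = 0) : lineL s ∈ linesOnQ₅ A C D E := by
  have hQ : D * s ^ 4 + 2 * C * s ^ 2 + D = 0 := by
    have h4 : A * (D * s ^ 4 + 2 * C * s ^ 2 + D) = A * 0 := by
      rw [mul_zero]; linear_combination D * hs - s ^ 2 * h
    exact mul_left_cancel₀ hA h4
  refine ⟨finrank_lineL s, ?_, ?_⟩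
  · intro v hv
    obtain ⟨x, y, rfl⟩ := mem_lineL.1 hv
    simp; ring
  · intro v hv
    obtain ⟨x, y, rfl⟩ := mem_lineL.1 hv
    simp only [quarticF]
    simp
    linear_combination (x ^ 4 + y ^ 4) * hs + x ^ 2 * y ^ 2 * hQ

lemma lineM_mem_Q5 {A C D E u : ℂ} (h : D * E = 2 * A * C) (hA : A ≠ 0)
    (hu : A * u ^ 4 + D * u ^ 2 + A = 0) : lineM u ∈ linesOnQ₅ A C D E := by
  have hQ : E * u ^ 4 + 2 * C * u ^ 2 + E = 0 := by
    have h4 : A * (E * u ^ 4 + 2 * C * u ^ 2 + E) = A * 0 := by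
      rw [mul_zero]; linear_combination E * hu - u ^ 2 * h
    exact mul_left_cancel₀ hA h4
  refine ⟨finrank_lineM u, ?_, ?_⟩
  · intro v hv
    obtain ⟨x, y, rfl⟩ := mem_lineM.1 hv
    simp; ring
  · intro v hv
    obtain ⟨x, y, rfl⟩ := mem_lineM.1 hv
    simp only [quarticF]
    simp
    linear_combination (x ^ 4 + y ^ 4) * hu + x ^ 2 * y ^ 2 * hQ

lemma lineL_inj : Function.Injective lineL := by
  intro s s' hss
  have hm : (![s, 0, 0, 1] : Fin 4 → ℂ) ∈ lineL s :=
    mem_lineL.2 ⟨1, 0, by funext i; fin_cases i <;> simp⟩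
  rw [hss, mem_lineL] at hm
  obtain ⟨x, y, hv⟩ := hm
  have h3 := congrFun hv 3
  have h0 := congrFun hv 0
  simp at h3 h0
  rw [← h3, one_mul] at h0
  exact h0

lemma lineM_inj : Function.Injective lineM := by
  intro s s' hss
  have hm : (![s, 0, 1, 0] : Fin 4 → ℂ) ∈ lineM s :=
    mem_lineM.2 ⟨1, 0, by funext i; fin_cases i <;> simp⟩
  rw [hss, mem_lineM] at hm
  obtain ⟨x, y, hv⟩ := hm
  have h2 := congrFun hv 2
  have h0 := congrFun hv 0
  simp at h2 h0
  rw [← h2, one_mul] at h0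
  exact h0

lemma lineL_ne_lineM (s u : ℂ) : lineL s ≠ lineM u := by
  intro hsu
  have hm : (![u, 0, 1, 0] : Fin 4 → ℂ) ∈ lineM u :=
    mem_lineM.2 ⟨1, 0, by funext i; fin_cases i <;> simp⟩
  rw [← hsu, mem_lineL] at hm
  obtain ⟨x, y, hv⟩ := hm
  have h1 := congrFun hv 1
  have h2 := congrFun hv 2
  simp at h1 h2
  rw [← h1, zero_mul] at h2
  exact one_ne_zero h2

lemma quartic_roots (A G : ℂ) (hA : A ≠ 0) (hG : G ^ 2 ≠ 4 * A ^ 2) :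
    ∃ p q : ℂ, p ≠ 0 ∧ q ≠ 0 ∧ p ^ 2 ≠ q ^ 2 ∧
      (A * p ^ 4 + G * p ^ 2 + A = 0) ∧ (A * q ^ 4 + G * q ^ 2 + A = 0) ∧
      (∀ s, A * s ^ 4 + G * s ^ 2 + A = 0 → s = p ∨ s = -p ∨ s = q ∨ s = -q) := by
  obtain ⟨d, hd⟩ := IsAlgClosed.exists_pow_nat_eq (G ^ 2 - 4 * A ^ 2) (n := 2) (by norm_num)
  obtain ⟨p, hp⟩ := IsAlgClosed.exists_pow_nat_eq ((d - G) / (2 * A)) (n := 2) (by norm_num)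
  obtain ⟨q, hq⟩ := IsAlgClosed.exists_pow_nat_eq ((-d - G) / (2 * A)) (n := 2) (by norm_num)
  have h2A : (2 : ℂ) * A ≠ 0 := by simp [hA]
  have h1 : 2 * A * p ^ 2 = d - G := by rw [hp]; field_simp
  have h2 : 2 * A * q ^ 2 = -d - G := by rw [hq]; field_simp
  have h4A2 : (4 : ℂ) * A ^ 2 ≠ 0 := by simp [hA]
  have hprod : p ^ 2 * q ^ 2 = 1 := by
    apply mul_left_cancel₀ h4A2
    linear_combination (2 * A * q ^ 2) * h1 + (d - G) * h2 - hd
  have hdne : d ≠ 0 := by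
    intro h0
    apply hG
    rw [h0] at hd
    linear_combination -hd
  have hpne : p ≠ 0 := by
    intro h0; rw [h0] at hprod; simp at hprod
  have hqne : q ≠ 0 := by
    intro h0; rw [h0] at hprod; simp at hprod
  have hpq : p ^ 2 ≠ q ^ 2 := by
    intro heq
    apply hdne
    have : 2 * A * p ^ 2 - 2 * A * q ^ 2 = 2 * d := by linear_combination h1 - h2
    rw [heq] at this
    simp at this
    exact this
  have hsat : ∀ r : ℂ, 2 * A * r ^ 2 = d - G → A * r ^ 4 + G * r ^ 2 + A = 0 := by
    intro r hr
    have h4A : (4 : ℂ) * A ≠ 0 := by simp [hA]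
    apply mul_left_cancel₀ h4A
    rw [mul_zero]
    linear_combination (2 * A * r ^ 2 + d + G) * hr + hd
  have hsat2 : ∀ r : ℂ, 2 * A * r ^ 2 = -d - G → A * r ^ 4 + G * r ^ 2 + A = 0 := by
    intro r hr
    have h4A : (4 : ℂ) * A ≠ 0 := by simp [hA]
    apply mul_left_cancel₀ h4A
    rw [mul_zero]
    linear_combination (2 * A * r ^ 2 - d + G) * hr + hd
  refine ⟨p, q, hpne, hqne, hpq, hsat p h1, hsat2 q h2, ?_⟩
  intro s hs
  have hsum : 2 * A * (p ^ 2 + q ^ 2) = -2 * G := by linear_combination h1 + h2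
  have key : A * (s - p) * (s + p) * ((s - q) * (s + q)) = 0 := by
    linear_combination hs - (s ^ 2 / 2) * hsum + A * hprod
  rcases mul_eq_zero.1 key with h' | h'
  · rcases mul_eq_zero.1 h' with h'' | h''
    · rcases mul_eq_zero.1 h'' with h3 | h3
      · exact absurd h3 hA
      · exact Or.inl (sub_eq_zero.1 h3)
    · exact Or.inr (Or.inl (eq_neg_of_add_eq_zero_left h''))
  · rcases mul_eq_zero.1 h' with h'' | h''
    · exact Or.inr (Or.inr (Or.inl (sub_eq_zero.1 h'')))
    · exact Or.inr (Or.inr (Or.inr (eq_neg_of_add_eq_zero_left h'')))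

lemma ncard_four {a b : ℂ} (ha : a ≠ 0) (hb : b ≠ 0) (hab : a ^ 2 ≠ b ^ 2) :
    ({a, -a, b, -b} : Set ℂ).ncard = 4 := by
  have h1 : a ≠ -a := fun h => ha (by linear_combination h / 2)
  have hab1 : a ≠ b := fun h => hab (by rw [h])
  have hab2 : a ≠ -b := fun h => hab (by rw [h]; ring)
  have hab3 : -a ≠ b := fun h => hab (by rw [← h]; ring)
  have hab4 : -a ≠ -b := fun h => hab1 (neg_injective h)
  have h2 : b ≠ -b := fun h => hb (by linear_combination h / 2)
  rw [Set.ncard_insert_of_notMem (by simp [h1, hab1, hab2]),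
    Set.ncard_insert_of_notMem (by simp [hab3, hab4]),
    Set.ncard_pair h2]


noncomputable def negZ : (Fin 4 → ℂ) ≃ₗ[ℂ] (Fin 4 → ℂ) :=
  LinearEquiv.ofInvolutive
    { toFun := fun v => ![v 0, v 1, -v 2, v 3]
      map_add' := fun u v => by funext i; fin_cases i <;> simp <;> ring
      map_smul' := fun c v => by funext i; fin_cases i <;> simp }
    (fun v => by funext i; fin_cases i <;> simp)

lemma negZ_lin_apply (v : Fin 4 → ℂ) : negZ.toLinearMap v = ![v 0, v 1, -v 2, v 3] := rfl

lemma negZ_invol (v : Fin 4 → ℂ) : negZ.toLinearMap (negZ.toLinearMap v) = v := by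
  funext i
  rw [negZ_lin_apply, negZ_lin_apply]
  fin_cases i <;> simp

lemma negZ_map_map (W : Submodule ℂ (Fin 4 → ℂ)) :
    Submodule.map negZ.toLinearMap (Submodule.map negZ.toLinearMap W) = W := by
  ext x
  simp only [Submodule.mem_map]
  constructor
  · rintro ⟨y, ⟨z, hz, rfl⟩, rfl⟩
    rw [negZ_invol]
    exact hz
  · intro hx
    exact ⟨negZ.toLinearMap x, ⟨x, hx, rfl⟩, negZ_invol x⟩

lemma Q6_eq (A C D E : ℂ) :
    linesOnQ₆ A C D E = (Submodule.map negZ.toLinearMap) '' (linesOnQ₅ A C D E) := by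
  have hF : ∀ v, quarticF A 0 C D E (negZ.toLinearMap v) = quarticF A 0 C D E v := by
    intro v
    rw [negZ_lin_apply]
    simp only [quarticF, Matrix.cons_val_zero, Matrix.cons_val_one, Matrix.head_cons,
      Matrix.cons_val_two, Matrix.tail_cons, Matrix.cons_val_three]
    ring
  ext W
  constructor
  · rintro ⟨h2, hq, hFW⟩
    refine ⟨Submodule.map negZ.toLinearMap W, ⟨?_, ?_, ?_⟩, negZ_map_map W⟩
    · exact h2 ▸ LinearEquiv.finrank_map_eq negZ W
    · intro v hv
      obtain ⟨u, hu, rfl⟩ := Submodule.mem_map.1 hv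
      have := hq u hu
      rw [negZ_lin_apply]
      simp
      linear_combination this
    · intro v hv
      obtain ⟨u, hu, rfl⟩ := Submodule.mem_map.1 hv
      rw [hF]
      exact hFW u hu
  · rintro ⟨V, ⟨h2, hq, hFV⟩, rfl⟩
    refine ⟨h2 ▸ LinearEquiv.finrank_map_eq negZ V, ?_, ?_⟩
    · intro v hv
      obtain ⟨u, hu, rfl⟩ := Submodule.mem_map.1 hv
      have := hq u hu
      rw [negZ_lin_apply]
      simp
      linear_combination this
    · intro v hv
      obtain ⟨u, hu, rfl⟩ := Submodule.mem_map.1 hv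
      rw [hF]
      exact hFV u hu


/-- If `DE = 2AC`, `A ≠ 0`, `D² ≠ 4A²` and `E² ≠ 4A²`, then the surface `X_{A,0,C,D,E}`
contains exactly eight lines lying on `Q₅ = {xy − zw = 0}`, exactly eight lines lying on
`Q₆ = {xy + zw = 0}`, and no line lies on both quadrics; consequently the surface
contains at least sixteen lines. -/
theorem sixteen_lines (A C D E : ℂ) (h : D * E = 2 * A * C) (hA : A ≠ 0)
    (hD : D ^ 2 ≠ 4 * A ^ 2) (hE : E ^ 2 ≠ 4 * A ^ 2) :
    (linesOnQ₅ A C D E).ncard = 8 ∧ (linesOnQ₆ A C D E).ncard = 8 ∧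
      Disjoint (linesOnQ₅ A C D E) (linesOnQ₆ A C D E) ∧
      ∃ S : Set (Submodule ℂ (Fin 4 → ℂ)), S.Finite ∧ S.ncard = 16 ∧
        S ⊆ {W | Module.finrank ℂ W = 2 ∧ ∀ v ∈ W, quarticF A 0 C D E v = 0} := by
  obtain ⟨p, q, hpne, hqne, hpq, hpsat, hqsat, hroots⟩ := quartic_roots A E hA hE
  obtain ⟨r, t, hrne, htne, hrt, hrsat, htsat, hroots'⟩ := quartic_roots A D hA hD
  have hset : linesOnQ₅ A C D E =
      lineL '' {p, -p, q, -q} ∪ lineM '' {r, -r, t, -t} := by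
    ext W
    constructor
    · rintro ⟨h2, hq2, hF⟩
      rcases classifyQ5 h2 hq2 with ⟨s, rfl⟩ | ⟨u, rfl⟩ | rfl | rfl
      · left
        have hmem : (![s, 0, 0, 1] : Fin 4 → ℂ) ∈ lineL s :=
          mem_lineL.2 ⟨1, 0, by funext i; fin_cases i <;> simp⟩
        have hs4 : A * s ^ 4 + E * s ^ 2 + A = 0 := by
          have hx := hF _ hmem
          simp [quarticF] at hx
          linear_combination hx
        exact ⟨s, by simpa using hroots s hs4, rfl⟩
      · right
        have hmem : (![u, 0, 1, 0] : Fin 4 → ℂ) ∈ lineM u :=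
          mem_lineM.2 ⟨1, 0, by funext i; fin_cases i <;> simp⟩
        have hu4 : A * u ^ 4 + D * u ^ 2 + A = 0 := by
          have hx := hF _ hmem
          simp [quarticF] at hx
          linear_combination hx
        exact ⟨u, by simpa using hroots' u hu4, rfl⟩
      · exfalso
        have hmem : (![1, 0, 0, 0] : Fin 4 → ℂ) ∈
            Submodule.span ℂ ({![1,0,0,0], ![0,0,0,1]} : Set (Fin 4 → ℂ)) :=
          Submodule.subset_span (Set.mem_insert _ _)
        have hx := hF _ hmem
        simp [quarticF] at hx
        exact hA hx
      · exfalso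
        have hmem : (![1, 0, 0, 0] : Fin 4 → ℂ) ∈
            Submodule.span ℂ ({![1,0,0,0], ![0,0,1,0]} : Set (Fin 4 → ℂ)) :=
          Submodule.subset_span (Set.mem_insert _ _)
        have hx := hF _ hmem
        simp [quarticF] at hx
        exact hA hx
    · rintro (⟨s, hs, rfl⟩ | ⟨u, hu, rfl⟩)
      · rcases hs with rfl | rfl | rfl | rfl
        · exact lineL_mem_Q5 h hA hpsat
        · exact lineL_mem_Q5 h hA (by linear_combination hpsat)
        · exact lineL_mem_Q5 h hA hqsat
        · exact lineL_mem_Q5 h hA (by linear_combination hqsat)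
      · rcases hu with rfl | rfl | rfl | rfl
        · exact lineM_mem_Q5 h hA hrsat
        · exact lineM_mem_Q5 h hA (by linear_combination hrsat)
        · exact lineM_mem_Q5 h hA htsat
        · exact lineM_mem_Q5 h hA (by linear_combination htsat)
  have hdisjLM : Disjoint (lineL '' {p, -p, q, -q}) (lineM '' {r, -r, t, -t}) := by
    rw [Set.disjoint_left]
    rintro x ⟨s, _, rfl⟩ ⟨u, _, hux⟩
    exact lineL_ne_lineM s u hux.symm
  have hcard5 : (linesOnQ₅ A C D E).ncard = 8 := by
    rw [hset, Set.ncard_union_eq hdisjLM ((Set.toFinite _).image _) ((Set.toFinite _).image _),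
      Set.ncard_image_of_injective _ lineL_inj, Set.ncard_image_of_injective _ lineM_inj,
      ncard_four hpne hqne hpq, ncard_four hrne htne hrt]
  have hinj : Function.Injective (Submodule.map negZ.toLinearMap :
      Submodule ℂ (Fin 4 → ℂ) → Submodule ℂ (Fin 4 → ℂ)) :=
    Submodule.map_injective_of_injective negZ.injective
  have hcard6 : (linesOnQ₆ A C D E).ncard = 8 := by
    rw [Q6_eq, Set.ncard_image_of_injective _ hinj, hcard5]
  have hdisj : Disjoint (linesOnQ₅ A C D E) (linesOnQ₆ A C D E) := by
    rw [Set.disjoint_left]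
    intro W h5 h6
    rw [hset] at h5
    rcases h5 with ⟨s, hs, rfl⟩ | ⟨u, hu, rfl⟩
    · have hsne : s ≠ 0 := by
        rcases hs with rfl | rfl | rfl | rfl
        · exact hpne
        · exact neg_ne_zero.2 hpne
        · exact hqne
        · exact neg_ne_zero.2 hqne
      have hmem : (![s, 1, s, 1] : Fin 4 → ℂ) ∈ lineL s :=
        mem_lineL.2 ⟨1, 1, by funext i; fin_cases i <;> simp⟩
      have hx := h6.2.1 _ hmem
      simp at hx
      exact hsne hx
    · have hune : u ≠ 0 := by
        rcases hu with rfl | rfl | rfl | rfl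
        · exact hrne
        · exact neg_ne_zero.2 hrne
        · exact htne
        · exact neg_ne_zero.2 htne
      have hmem : (![u, 1, 1, u] : Fin 4 → ℂ) ∈ lineM u :=
        mem_lineM.2 ⟨1, 1, by funext i; fin_cases i <;> simp⟩
      have hx := h6.2.1 _ hmem
      simp at hx
      exact hune hx
  have hfin5 : (linesOnQ₅ A C D E).Finite := by
    rw [hset]
    exact ((Set.toFinite _).image _).union ((Set.toFinite _).image _)
  have hfin6 : (linesOnQ₆ A C D E).Finite := by
    rw [Q6_eq]
    exact hfin5.image _
  refine ⟨hcard5, hcard6, hdisj, linesOnQ₅ A C D E ∪ linesOnQ₆ A C D E,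
    hfin5.union hfin6, ?_, ?_⟩
  · rw [Set.ncard_union_eq hdisj hfin5 hfin6, hcard5, hcard6]
  · rintro W (⟨h2, _, hF⟩ | ⟨h2, _, hF⟩) <;> exact ⟨h2, hF⟩
end

section
/- There are exactly 48 two-dimensional ℂ-linear subspaces W of ℂ⁴ on which the polynomial x⁴ + y⁴ + z⁴ + w⁴ vanishes identically; that is, the Fermat quartic surface {x⁴ + y⁴ + z⁴ + w⁴ = 0} ⊂ ℙ³(ℂ) contains exactly 48 lines. -/
open Polynomial Submodule Module

section FermatQuarticAux

/-- First standard basis vector of each of the three families of lines. -/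
private def uvec : Fin 3 → ℂ → (Fin 4 → ℂ)
  | 0, α => ![1, α, 0, 0]
  | 1, α => ![1, 0, α, 0]
  | 2, α => ![1, 0, 0, α]

/-- Second standard basis vector of each of the three families of lines. -/
private def wvec : Fin 3 → ℂ → (Fin 4 → ℂ)
  | 0, β => ![0, 0, 1, β]
  | 1, β => ![0, 1, 0, β]
  | 2, β => ![0, 1, β, 0]

/-- The standard lines on the Fermat quartic. -/
private noncomputable def stdL (i : Fin 3) (α β : ℂ) : Submodule ℂ (Fin 4 → ℂ) :=
  span ℂ {uvec i α, wvec i β}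

private lemma root_ne {z : ℂ} (h : z^4 = -1) : z ≠ 0 := by
  intro h0; rw [h0] at h; norm_num at h

private lemma inv_root {z : ℂ} (h : z^4 = -1) : (z⁻¹)^4 = -1 := by
  rw [inv_pow, h]; norm_num

private lemma key_system (a b c d : ℂ)
    (h40 : 1 + a^4 + b^4 = 0) (h31 : a^3*c + b^3*d = 0) (h22 : a^2*c^2 + b^2*d^2 = 0)
    (h13 : a*c^3 + b*d^3 = 0) (h04 : 1 + c^4 + d^4 = 0) :
    (b = 0 ∧ c = 0 ∧ a^4 = -1 ∧ d^4 = -1) ∨ (a = 0 ∧ d = 0 ∧ b^4 = -1 ∧ c^4 = -1) := by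
  have fact : a*b*c*d*(a*d-b*c)^2 = 0 := by
    linear_combination (a*c^3 + b*d^3)*h31 - (a^2*c^2+b^2*d^2)*h22
  have hc0 : c = 0 → (b = 0 ∧ c = 0 ∧ a^4 = -1 ∧ d^4 = -1) := by
    intro hc
    subst hc
    have hd4 : d^4 = -1 := by linear_combination h04
    have hd : d ≠ 0 := root_ne hd4
    have hb : b = 0 := by
      have h2 : b^3*d = 0 := by linear_combination h31
      rcases mul_eq_zero.mp h2 with h | h
      · exact pow_eq_zero_iff (by norm_num) |>.mp h
      · exact absurd h hd
    subst hb
    exact ⟨rfl, rfl, by linear_combination h40, hd4⟩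
  have hb0 : b = 0 → (b = 0 ∧ c = 0 ∧ a^4 = -1 ∧ d^4 = -1) := by
    intro hb
    subst hb
    have ha4 : a^4 = -1 := by linear_combination h40
    have ha : a ≠ 0 := root_ne ha4
    have hc : c = 0 := by
      have : a^3*c = 0 := by linear_combination h31
      rcases mul_eq_zero.mp this with h | h
      · exact absurd (pow_eq_zero_iff (by norm_num) |>.mp h) ha
      · exact h
    subst hc
    exact ⟨rfl, rfl, ha4, by linear_combination h04⟩
  have hd0 : d = 0 → (a = 0 ∧ d = 0 ∧ b^4 = -1 ∧ c^4 = -1) := by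
    intro hd
    subst hd
    have hc4 : c^4 = -1 := by linear_combination h04
    have hc : c ≠ 0 := root_ne hc4
    have ha : a = 0 := by
      have : a*c^3 = 0 := by linear_combination h13
      rcases mul_eq_zero.mp this with h | h
      · exact h
      · exact absurd (pow_eq_zero_iff (by norm_num) |>.mp h) hc
    subst ha
    exact ⟨rfl, rfl, by linear_combination h40, hc4⟩
  have ha0 : a = 0 → (a = 0 ∧ d = 0 ∧ b^4 = -1 ∧ c^4 = -1) := by
    intro ha
    subst ha
    have hb4 : b^4 = -1 := by linear_combination h40
    have hb : b ≠ 0 := root_ne hb4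
    have hd : d = 0 := by
      have : b^3*d = 0 := by linear_combination h31
      rcases mul_eq_zero.mp this with h | h
      · exact absurd (pow_eq_zero_iff (by norm_num) |>.mp h) hb
      · exact h
    subst hd
    exact ⟨rfl, rfl, hb4, by linear_combination h04⟩
  rcases mul_eq_zero.mp fact with h | h
  · rcases mul_eq_zero.mp h with h | h
    · rcases mul_eq_zero.mp h with h | h
      · rcases mul_eq_zero.mp h with h | h
        · exact Or.inr (ha0 h)
        · exact Or.inl (hb0 h)
      · exact Or.inl (hc0 h)
    · exact Or.inr (hd0 h)
  · have he : a*d - b*c = 0 := pow_eq_zero_iff (by norm_num) |>.mp h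
    have hc : c = 0 := by linear_combination c*h40 - a*h31 + b^3*he
    exact Or.inl (hc0 hc)

private lemma quintic_system (a b c d : ℂ)
    (h1 : 1 + a^4 + b^4 = 0)
    (h2 : 1 + c^4 + d^4 = 0)
    (h3 : 2 + (a+c)^4 + (b+d)^4 = 0)
    (h4 : 2 + (a-c)^4 + (b-d)^4 = 0)
    (h5 : 17 + (a+2*c)^4 + (b+2*d)^4 = 0) :
    (b = 0 ∧ c = 0 ∧ a^4 = -1 ∧ d^4 = -1) ∨ (a = 0 ∧ d = 0 ∧ b^4 = -1 ∧ c^4 = -1) := by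
  have h22 : a^2*c^2 + b^2*d^2 = 0 := by linear_combination (h3 + h4 - h1 - h1 - h2 - h2)/12
  have h13 : a*c^3 + b*d^3 = 0 := by
    linear_combination ((h5 - h1 - 16*h2)/8 - 3*h22 - (h3-h4)/8)/3
  have h31 : a^3*c + b^3*d = 0 := by
    linear_combination (h3-h4)/8 - h13
  exact key_system a b c d h1 h31 h22 h13 h2

private lemma li_of_coords_s2 {u v : Fin 4 → ℂ} {i j : Fin 4} (hui : u i = 1) (huj : u j = 0)
    (hvi : v i = 0) (hvj : v j = 1) : LinearIndependent ℂ ![u, v] := by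
  rw [LinearIndependent.pair_iff]
  intro s t hst
  have h1 := congrFun hst i
  have h2 := congrFun hst j
  simp [hui, huj, hvi, hvj] at h1 h2
  exact ⟨h1, h2⟩

private lemma finrank_span_pair_s2 {u v : Fin 4 → ℂ} (h : LinearIndependent ℂ ![u, v]) :
    finrank ℂ (span ℂ {u, v} : Submodule ℂ (Fin 4 → ℂ)) = 2 := by
  have := finrank_span_eq_card h
  have hr : Set.range ![u, v] = {u, v} := by
    simp [Matrix.range_cons, Matrix.range_empty, Set.pair_comm]
  rw [hr] at this
  simpa using this

private lemma span_pair_smul_left {u v : Fin 4 → ℂ} {s : ℂ} (hs : s ≠ 0) :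
    span ℂ {s • u, v} = (span ℂ {u, v} : Submodule ℂ (Fin 4 → ℂ)) := by
  apply le_antisymm
  · rw [span_le, Set.pair_subset_iff]
    exact ⟨smul_mem _ s (subset_span (by simp)), subset_span (by simp)⟩
  · rw [span_le, Set.pair_subset_iff]
    constructor
    · have h1 : s • u ∈ span ℂ ({s • u, v} : Set (Fin 4 → ℂ)) := subset_span (by simp)
      have h2 := smul_mem (span ℂ ({s • u, v} : Set (Fin 4 → ℂ))) s⁻¹ h1
      rwa [smul_smul, inv_mul_cancel₀ hs, one_smul] at h2
    · exact subset_span (by simp)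

private lemma span_pair_comm (u v : Fin 4 → ℂ) :
    span ℂ {u, v} = (span ℂ {v, u} : Submodule ℂ (Fin 4 → ℂ)) := by
  rw [Set.pair_comm]

private lemma span_pair_smul_right {u v : Fin 4 → ℂ} {s : ℂ} (hs : s ≠ 0) :
    span ℂ {u, s • v} = (span ℂ {u, v} : Submodule ℂ (Fin 4 → ℂ)) := by
  rw [span_pair_comm, span_pair_smul_left hs, span_pair_comm]

private lemma eq_span_of {W : Submodule ℂ (Fin 4 → ℂ)} {u v : Fin 4 → ℂ}
    (hu : u ∈ W) (hv : v ∈ W) (h : LinearIndependent ℂ ![u, v]) (hW : finrank ℂ W = 2) :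
    W = span ℂ {u, v} := by
  refine (Submodule.eq_of_le_of_finrank_eq ?_ ?_).symm
  · rw [span_le, Set.pair_subset_iff]
    exact ⟨hu, hv⟩
  · rw [finrank_span_pair_s2 h, hW]

private lemma li_std (i : Fin 3) (α β : ℂ) : LinearIndependent ℂ ![uvec i α, wvec i β] := by
  fin_cases i
  · exact li_of_coords_s2 (i := 0) (j := 2) (by simp [uvec]) (by simp [uvec]) (by simp [wvec]) (by simp [wvec])
  · exact li_of_coords_s2 (i := 0) (j := 1) (by simp [uvec]) (by simp [uvec]) (by simp [wvec]) (by simp [wvec])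
  · exact li_of_coords_s2 (i := 0) (j := 1) (by simp [uvec]) (by simp [uvec]) (by simp [wvec]) (by simp [wvec])

private lemma stdL_finrank (i : Fin 3) (α β : ℂ) : finrank ℂ (stdL i α β) = 2 := by
  rw [stdL]; exact finrank_span_pair_s2 (li_std i α β)

private lemma stdL_vanish (i : Fin 3) {α β : ℂ} (hα : α^4 = -1) (hβ : β^4 = -1) :
    ∀ w ∈ stdL i α β, w 0 ^ 4 + w 1 ^ 4 + w 2 ^ 4 + w 3 ^ 4 = 0 := by
  intro w hw
  rw [stdL, mem_span_pair] at hw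
  obtain ⟨s, t, hst⟩ := hw
  rw [← hst]
  fin_cases i <;>
    simp [uvec, wvec] <;>
    ring_nf <;>
    linear_combination s^4*hα + t^4*hβ

private lemma exists_echelon (W : Submodule ℂ (Fin 4 → ℂ)) (hW : finrank ℂ W = 2) :
    ∃ (i j : Fin 4) (u v : Fin 4 → ℂ), i ≠ j ∧ u ∈ W ∧ v ∈ W ∧
      u i = 1 ∧ u j = 0 ∧ v i = 0 ∧ v j = 1 := by
  have hWbot : W ≠ ⊥ := by
    intro h
    rw [h, finrank_bot] at hW
    norm_num at hW
  obtain ⟨u₀, hu₀W, hu₀⟩ := W.ne_bot_iff.mp hWbot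
  have hv₀ : ∃ v₀ ∈ W, v₀ ∉ span ℂ {u₀} := by
    by_contra h
    push_neg at h
    have hle : W ≤ span ℂ {u₀} := h
    have := Submodule.finrank_mono hle
    rw [hW, finrank_span_singleton hu₀] at this
    norm_num at this
  obtain ⟨v₀, hv₀W, hv₀⟩ := hv₀
  obtain ⟨i, hi⟩ := Function.ne_iff.mp hu₀
  simp only [Pi.zero_apply] at hi
  set u₁ : Fin 4 → ℂ := (u₀ i)⁻¹ • u₀ with hu₁def
  have hu₁W : u₁ ∈ W := W.smul_mem _ hu₀W
  have hu₁i : u₁ i = 1 := by simp [hu₁def, inv_mul_cancel₀ hi]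
  set v₁ : Fin 4 → ℂ := v₀ - (v₀ i) • u₁ with hv₁def
  have hv₁W : v₁ ∈ W := W.sub_mem hv₀W (W.smul_mem _ hu₁W)
  have hv₁i : v₁ i = 0 := by simp [hv₁def, hu₁i]
  have hv₁ne : v₁ ≠ 0 := by
    intro h
    apply hv₀
    have h2 : v₀ = v₀ i • ((u₀ i)⁻¹ • u₀) := sub_eq_zero.mp (hv₁def ▸ h)
    rw [smul_smul] at h2
    exact Submodule.mem_span_singleton.mpr ⟨_, h2.symm⟩
  obtain ⟨j, hj⟩ := Function.ne_iff.mp hv₁ne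
  simp only [Pi.zero_apply] at hj
  have hij : i ≠ j := by
    intro h
    rw [← h, hv₁i] at hj
    exact hj rfl
  set v₂ : Fin 4 → ℂ := (v₁ j)⁻¹ • v₁ with hv₂def
  have hv₂W : v₂ ∈ W := W.smul_mem _ hv₁W
  have hv₂i : v₂ i = 0 := by simp [hv₂def, hv₁i]
  have hv₂j : v₂ j = 1 := by simp [hv₂def, inv_mul_cancel₀ hj]
  set u₂ : Fin 4 → ℂ := u₁ - (u₁ j) • v₂ with hu₂def
  have hu₂W : u₂ ∈ W := W.sub_mem hu₁W (W.smul_mem _ hv₂W)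
  have hu₂i : u₂ i = 1 := by simp [hu₂def, hu₁i, hv₂i]
  have hu₂j : u₂ j = 0 := by simp [hu₂def, hv₂j]
  exact ⟨i, j, u₂, v₂, hij, hu₂W, hv₂W, hu₂i, hu₂j, hv₂i, hv₂j⟩

private lemma span_eq_stdL {u v : Fin 4 → ℂ} {k : Fin 3} {α β s t : ℂ} (hs : s ≠ 0) (ht : t ≠ 0)
    (hu : u = s • uvec k α) (hv : v = t • wvec k β) :
    span ℂ {u, v} = stdL k α β := by
  rw [hu, hv, span_pair_smul_left hs, span_pair_smul_right ht]; rfl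

private lemma span_eq_stdL' {u v : Fin 4 → ℂ} {k : Fin 3} {α β s t : ℂ} (hs : s ≠ 0) (ht : t ≠ 0)
    (hu : u = s • wvec k β) (hv : v = t • uvec k α) :
    span ℂ {u, v} = stdL k α β := by
  rw [hu, hv, span_pair_smul_left hs, span_pair_smul_right ht, span_pair_comm]; rfl

private lemma stdL_inj {k k' : Fin 3} {α β α' β' : ℂ} (hα' : α'^4 = -1) (hβ' : β'^4 = -1)
    (h : stdL k α β = stdL k' α' β') : k = k' ∧ α = α' ∧ β = β' := by
  have h1 : uvec k α ∈ stdL k' α' β' := by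
    rw [← h]; exact subset_span (Set.mem_insert _ _)
  have h2 : wvec k β ∈ stdL k' α' β' := by
    rw [← h]; exact subset_span (Set.mem_insert_of_mem _ rfl)
  rw [stdL, mem_span_pair] at h1 h2
  obtain ⟨s, t, hst⟩ := h1
  obtain ⟨s', t', hst'⟩ := h2
  have c0 := congrFun hst 0
  have c1 := congrFun hst 1
  have c2 := congrFun hst 2
  have c3 := congrFun hst 3
  have d0 := congrFun hst' 0
  have d1 := congrFun hst' 1
  have d2 := congrFun hst' 2
  have d3 := congrFun hst' 3
  have hαn := root_ne hα'
  have hβn := root_ne hβ'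
  clear hst hst' h
  fin_cases k <;> fin_cases k' <;>
    simp only [uvec, wvec, Pi.add_apply, Pi.smul_apply, smul_eq_mul, Matrix.cons_val_zero,
      Matrix.cons_val_one, Matrix.head_cons, Matrix.cons_val_two, Matrix.tail_cons,
      Matrix.cons_val_three, mul_one, mul_zero, add_zero, zero_add, Fin.isValue] at c0 c1 c2 c3 d0 d1 d2 d3 <;>
    subst c0 <;> subst d0 <;>
    simp only [one_mul] at c1 c2 c3 d1 d2 d3 <;>
    first
    | exact absurd c1 hαn
    | exact absurd c2 hαn
    | exact absurd c3 hαn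
    | exact ⟨rfl, c1.symm, by rw [d2, one_mul] at d3; exact d3.symm⟩
    | exact ⟨rfl, c2.symm, by rw [d1, one_mul] at d3; exact d3.symm⟩
    | exact ⟨rfl, c3.symm, by rw [d1, one_mul] at d2; exact d2.symm⟩

private lemma core (W : Submodule ℂ (Fin 4 → ℂ))
    (hvan : ∀ w ∈ W, w 0 ^ 4 + w 1 ^ 4 + w 2 ^ 4 + w 3 ^ 4 = 0)
    (hfr : finrank ℂ W = 2)
    {i j : Fin 4} (hij : i < j) {u v : Fin 4 → ℂ}
    (hu : u ∈ W) (hv : v ∈ W)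
    (hui : u i = 1) (huj : u j = 0) (hvi : v i = 0) (hvj : v j = 1) :
    ∃ (k : Fin 3) (α β : ℂ), α^4 = -1 ∧ β^4 = -1 ∧ W = stdL k α β := by
  have hWspan : W = span ℂ {u, v} := eq_span_of hu hv (li_of_coords_s2 hui huj hvi hvj) hfr
  have e1 := hvan u hu
  have e2 := hvan v hv
  have e3 := hvan (u + v) (W.add_mem hu hv)
  have e4 := hvan (u - v) (W.sub_mem hu hv)
  have e5 := hvan (u + (2:ℂ) • v) (W.add_mem hu (W.smul_mem _ hv))
  simp only [Pi.add_apply, Pi.sub_apply, Pi.smul_apply, smul_eq_mul] at e3 e4 e5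
  fin_cases i <;> fin_cases j <;> simp only [Fin.mk_lt_mk, Fin.isValue] at hij hui huj hvi hvj ⊢ <;>
    first
    | omega
    | skip
  -- case (0,1)
  · have hui : u 0 = 1 := hui
    have huj : u 1 = 0 := huj
    have hvi : v 0 = 0 := hvi
    have hvj : v 1 = 1 := hvj
    rw [hui, huj] at e1 e3 e4 e5
    rw [hvi, hvj] at e2 e3 e4 e5
    rcases quintic_system (u 2) (u 3) (v 2) (v 3)
      (by linear_combination e1) (by linear_combination e2) (by linear_combination e3)
      (by linear_combination e4) (by linear_combination e5) with ⟨hb, hc, hα, hβ⟩ | ⟨ha, hd, hα, hβ⟩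
    · refine ⟨1, u 2, v 3, hα, hβ, hWspan.trans (span_eq_stdL one_ne_zero one_ne_zero ?_ ?_)⟩
      · funext x; fin_cases x <;> simp [uvec, hui, huj, hb]
      · funext x; fin_cases x <;> simp [wvec, hvi, hvj, hc]
    · refine ⟨2, u 3, v 2, hα, hβ, hWspan.trans (span_eq_stdL one_ne_zero one_ne_zero ?_ ?_)⟩
      · funext x; fin_cases x <;> simp [uvec, hui, huj, ha]
      · funext x; fin_cases x <;> simp [wvec, hvi, hvj, hd]
  -- case (0,2)
  · have hui : u 0 = 1 := hui
    have huj : u 2 = 0 := huj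
    have hvi : v 0 = 0 := hvi
    have hvj : v 2 = 1 := hvj
    rw [hui, huj] at e1 e3 e4 e5
    rw [hvi, hvj] at e2 e3 e4 e5
    rcases quintic_system (u 1) (u 3) (v 1) (v 3)
      (by linear_combination e1) (by linear_combination e2) (by linear_combination e3)
      (by linear_combination e4) (by linear_combination e5) with ⟨hb, hc, hα, hβ⟩ | ⟨ha, hd, hα, hβ⟩
    · refine ⟨0, u 1, v 3, hα, hβ, hWspan.trans (span_eq_stdL one_ne_zero one_ne_zero ?_ ?_)⟩
      · funext x; fin_cases x <;> simp [uvec, hui, huj, hb]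
      · funext x; fin_cases x <;> simp [wvec, hvi, hvj, hc]
    · refine ⟨2, u 3, (v 1)⁻¹, hα, inv_root hβ,
        hWspan.trans (span_eq_stdL one_ne_zero (root_ne hβ) ?_ ?_)⟩
      · funext x; fin_cases x <;> simp [uvec, hui, huj, ha]
      · funext x; fin_cases x <;>
          simp [wvec, hvi, hvj, hd, mul_inv_cancel₀ (root_ne hβ)]
  -- case (0,3)
  · have hui : u 0 = 1 := hui
    have huj : u 3 = 0 := huj
    have hvi : v 0 = 0 := hvi
    have hvj : v 3 = 1 := hvj
    rw [hui, huj] at e1 e3 e4 e5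
    rw [hvi, hvj] at e2 e3 e4 e5
    rcases quintic_system (u 1) (u 2) (v 1) (v 2)
      (by linear_combination e1) (by linear_combination e2) (by linear_combination e3)
      (by linear_combination e4) (by linear_combination e5) with ⟨hb, hc, hα, hβ⟩ | ⟨ha, hd, hα, hβ⟩
    · refine ⟨0, u 1, (v 2)⁻¹, hα, inv_root hβ,
        hWspan.trans (span_eq_stdL one_ne_zero (root_ne hβ) ?_ ?_)⟩
      · funext x; fin_cases x <;> simp [uvec, hui, huj, hb]
      · funext x; fin_cases x <;>
          simp [wvec, hvi, hvj, hc, mul_inv_cancel₀ (root_ne hβ)]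
    · refine ⟨1, u 2, (v 1)⁻¹, hα, inv_root hβ,
        hWspan.trans (span_eq_stdL one_ne_zero (root_ne hβ) ?_ ?_)⟩
      · funext x; fin_cases x <;> simp [uvec, hui, huj, ha]
      · funext x; fin_cases x <;>
          simp [wvec, hvi, hvj, hd, mul_inv_cancel₀ (root_ne hβ)]
  -- case (1,2)
  · have hui : u 1 = 1 := hui
    have huj : u 2 = 0 := huj
    have hvi : v 1 = 0 := hvi
    have hvj : v 2 = 1 := hvj
    rw [hui, huj] at e1 e3 e4 e5
    rw [hvi, hvj] at e2 e3 e4 e5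
    rcases quintic_system (u 0) (u 3) (v 0) (v 3)
      (by linear_combination e1) (by linear_combination e2) (by linear_combination e3)
      (by linear_combination e4) (by linear_combination e5) with ⟨hb, hc, hα, hβ⟩ | ⟨ha, hd, hα, hβ⟩
    · refine ⟨0, (u 0)⁻¹, v 3, inv_root hα, hβ,
        hWspan.trans (span_eq_stdL (root_ne hα) one_ne_zero ?_ ?_)⟩
      · funext x; fin_cases x <;>
          simp [uvec, hui, huj, hb, mul_inv_cancel₀ (root_ne hα)]
      · funext x; fin_cases x <;> simp [wvec, hvi, hvj, hc]
    · refine ⟨1, (v 0)⁻¹, u 3, inv_root hβ, hα,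
        hWspan.trans (span_eq_stdL' one_ne_zero (root_ne hβ) ?_ ?_)⟩
      · funext x; fin_cases x <;> simp [wvec, hui, huj, ha]
      · funext x; fin_cases x <;>
          simp [uvec, hvi, hvj, hd, mul_inv_cancel₀ (root_ne hβ)]
  -- case (1,3)
  · have hui : u 1 = 1 := hui
    have huj : u 3 = 0 := huj
    have hvi : v 1 = 0 := hvi
    have hvj : v 3 = 1 := hvj
    rw [hui, huj] at e1 e3 e4 e5
    rw [hvi, hvj] at e2 e3 e4 e5
    rcases quintic_system (u 0) (u 2) (v 0) (v 2)
      (by linear_combination e1) (by linear_combination e2) (by linear_combination e3)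
      (by linear_combination e4) (by linear_combination e5) with ⟨hb, hc, hα, hβ⟩ | ⟨ha, hd, hα, hβ⟩
    · refine ⟨0, (u 0)⁻¹, (v 2)⁻¹, inv_root hα, inv_root hβ,
        hWspan.trans (span_eq_stdL (root_ne hα) (root_ne hβ) ?_ ?_)⟩
      · funext x; fin_cases x <;>
          simp [uvec, hui, huj, hb, mul_inv_cancel₀ (root_ne hα)]
      · funext x; fin_cases x <;>
          simp [wvec, hvi, hvj, hc, mul_inv_cancel₀ (root_ne hβ)]
    · refine ⟨2, (v 0)⁻¹, u 2, inv_root hβ, hα,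
        hWspan.trans (span_eq_stdL' one_ne_zero (root_ne hβ) ?_ ?_)⟩
      · funext x; fin_cases x <;> simp [wvec, hui, huj, ha]
      · funext x; fin_cases x <;>
          simp [uvec, hvi, hvj, hd, mul_inv_cancel₀ (root_ne hβ)]
  -- case (2,3)
  · have hui : u 2 = 1 := hui
    have huj : u 3 = 0 := huj
    have hvi : v 2 = 0 := hvi
    have hvj : v 3 = 1 := hvj
    rw [hui, huj] at e1 e3 e4 e5
    rw [hvi, hvj] at e2 e3 e4 e5
    rcases quintic_system (u 0) (u 1) (v 0) (v 1)
      (by linear_combination e1) (by linear_combination e2) (by linear_combination e3)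
      (by linear_combination e4) (by linear_combination e5) with ⟨hb, hc, hα, hβ⟩ | ⟨ha, hd, hα, hβ⟩
    · refine ⟨1, (u 0)⁻¹, (v 1)⁻¹, inv_root hα, inv_root hβ,
        hWspan.trans (span_eq_stdL (root_ne hα) (root_ne hβ) ?_ ?_)⟩
      · funext x; fin_cases x <;>
          simp [uvec, hui, huj, hb, mul_inv_cancel₀ (root_ne hα)]
      · funext x; fin_cases x <;>
          simp [wvec, hvi, hvj, hc, mul_inv_cancel₀ (root_ne hα), mul_inv_cancel₀ (root_ne hβ)]
    · refine ⟨2, (v 0)⁻¹, (u 1)⁻¹, inv_root hβ, inv_root hα,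
        hWspan.trans (span_eq_stdL' (root_ne hα) (root_ne hβ) ?_ ?_)⟩
      · funext x; fin_cases x <;>
          simp [wvec, hui, huj, ha, mul_inv_cancel₀ (root_ne hα)]
      · funext x; fin_cases x <;>
          simp [uvec, hvi, hvj, hd, mul_inv_cancel₀ (root_ne hβ)]

end FermatQuarticAux

private noncomputable def RF : Finset ℂ := ((X : ℂ[X])^4 - C (-1)).roots.toFinset

private lemma mem_RF {z : ℂ} : z ∈ RF ↔ z^4 = -1 := by
  rw [RF, Multiset.mem_toFinset,
    Polynomial.mem_roots (X_pow_sub_C_ne_zero (by norm_num) (-1 : ℂ))]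
  simp [Polynomial.IsRoot, sub_eq_zero, add_eq_zero_iff_eq_neg]

private lemma card_RF : RF.card = 4 := by
  have hsep : ((X : ℂ[X])^4 - C (-1)).Separable :=
    separable_X_pow_sub_C (-1) (by norm_num) (by norm_num)
  rw [RF, Multiset.toFinset_card_of_nodup (Polynomial.nodup_roots hsep)]
  rw [(Polynomial.splits_iff_card_roots).mp (IsAlgClosed.splits _)]
  exact natDegree_X_pow_sub_C

/-- The Fermat quartic surface `{x⁴ + y⁴ + z⁴ + w⁴ = 0} ⊂ ℙ³(ℂ)` contains exactly 48
lines: there are exactly 48 two-dimensional `ℂ`-linear subspaces `W` of `ℂ⁴` on which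
the polynomial `x⁴ + y⁴ + z⁴ + w⁴` vanishes identically. -/
theorem fermat_quartic_has_48_lines :
    {W : Submodule ℂ (Fin 4 → ℂ) | Module.finrank ℂ W = 2 ∧
      ∀ v ∈ W, v 0 ^ 4 + v 1 ^ 4 + v 2 ^ 4 + v 3 ^ 4 = 0}.ncard = 48 := by
  classical
  have hmemD : ∀ p : Fin 3 × ℂ × ℂ,
      p ∈ (Finset.univ ×ˢ RF ×ˢ RF : Finset (Fin 3 × ℂ × ℂ)) ↔
        p.2.1^4 = -1 ∧ p.2.2^4 = -1 := by
    intro p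
    simp [Finset.mem_product, mem_RF]
  have hset : {W : Submodule ℂ (Fin 4 → ℂ) | Module.finrank ℂ W = 2 ∧
        ∀ v ∈ W, v 0 ^ 4 + v 1 ^ 4 + v 2 ^ 4 + v 3 ^ 4 = 0}
      = (fun p : Fin 3 × ℂ × ℂ => stdL p.1 p.2.1 p.2.2) ''
          ((Finset.univ ×ˢ RF ×ˢ RF : Finset (Fin 3 × ℂ × ℂ)) : Set (Fin 3 × ℂ × ℂ)) := by
    ext W
    constructor
    · rintro ⟨hfr, hvan⟩
      have hex : ∃ (k : Fin 3) (α β : ℂ), α^4 = -1 ∧ β^4 = -1 ∧ W = stdL k α β := by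
        obtain ⟨i, j, u, v, hij, hu, hv, hui, huj, hvi, hvj⟩ := exists_echelon W hfr
        rcases hij.lt_or_gt with hlt | hlt
        · exact core W hvan hfr hlt hu hv hui huj hvi hvj
        · exact core W hvan hfr hlt hv hu hvj hvi huj hui
      obtain ⟨k, α, β, hα, hβ, hWeq⟩ := hex
      exact ⟨(k, α, β), by simpa using (hmemD (k, α, β)).mpr ⟨hα, hβ⟩, hWeq.symm⟩
    · rintro ⟨⟨k, α, β⟩, hmem, rfl⟩
      rw [Finset.mem_coe, hmemD] at hmem
      exact ⟨stdL_finrank k α β, stdL_vanish k hmem.1 hmem.2⟩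
  have hinj : Set.InjOn (fun p : Fin 3 × ℂ × ℂ => stdL p.1 p.2.1 p.2.2)
      ((Finset.univ ×ˢ RF ×ˢ RF : Finset (Fin 3 × ℂ × ℂ)) : Set (Fin 3 × ℂ × ℂ)) := by
    rintro ⟨k, α, β⟩ hm ⟨k', α', β'⟩ hm' heq
    rw [Finset.mem_coe, hmemD] at hm hm'
    obtain ⟨h1, h2, h3⟩ := stdL_inj hm'.1 hm'.2 heq
    exact Prod.ext_iff.mpr ⟨h1, Prod.ext_iff.mpr ⟨h2, h3⟩⟩
  rw [hset, Set.ncard_image_of_injOn hinj, Set.ncard_coe_finset]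
  simp [Finset.card_product, card_RF]
end

section
/- Let Δ = 16A³ + AB² − 4A(C²+D²+E²) + 4CDE ∈ ℂ[A,B,C,D,E]. For a nonzero vector v = (A,B,C,D,E) ∈ ℂ⁵, all five partial derivatives of Δ vanish at v if and only if v is a nonzero scalar multiple of one of the ten vectors (1,0,−2,−2,2), (1,0,−2,2,−2), (1,0,2,−2,−2), (1,0,2,2,2), (0,−2,1,0,0), (0,2,1,0,0), (0,−2,0,1,0), (0,2,0,1,0), (0,−2,0,0,1), (0,2,0,0,1). In other words, the Segre cubic {Δ = 0} ⊂ ℙ⁴(ℂ) has exactly these ten singular points. -/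
open MvPolynomial

/-- `Δ = 16A³ + AB² − 4A(C²+D²+E²) + 4CDE` as a polynomial in `ℂ[A,B,C,D,E]`,
with `A,B,C,D,E = X 0, …, X 4`; the Segre cubic is `{Δ = 0} ⊂ ℙ⁴(ℂ)`. -/
noncomputable def segreCubic : MvPolynomial (Fin 5) ℂ :=
  C 16 * X 0 ^ 3 + X 0 * X 1 ^ 2 - C 4 * X 0 * (X 2 ^ 2 + X 3 ^ 2 + X 4 ^ 2)
    + C 4 * X 2 * X 3 * X 4

lemma segre_vec_eq (v : Fin 5 → ℂ) (t x0 x1 x2 x3 x4 : ℂ) (h0 : v 0 = t*x0) (h1 : v 1 = t*x1)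
    (h2 : v 2 = t*x2) (h3 : v 3 = t*x3) (h4 : v 4 = t*x4) :
    v = t • ![x0,x1,x2,x3,x4] := by
  funext i; fin_cases i <;> simpa

lemma segre_sq_cases (x y : ℂ) (h : x^2 = y^2) : x = y ∨ x = -y := by
  have h2 : (x - y) * (x + y) = 0 := by linear_combination h
  rcases mul_eq_zero.mp h2 with h | h
  · left; linear_combination h
  · right; linear_combination h

lemma segre_aux0 (t : ℂ) (i : Fin 5) :
    eval (t • (![1, 0, -2, -2, 2] : Fin 5 → ℂ)) (pderiv i segreCubic) = 0 := by
  fin_cases i <;>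
    simp [segreCubic, pderiv_mul, pderiv_pow, Pi.single_apply] <;> ring

lemma segre_aux1 (t : ℂ) (i : Fin 5) :
    eval (t • (![1, 0, -2, 2, -2] : Fin 5 → ℂ)) (pderiv i segreCubic) = 0 := by
  fin_cases i <;>
    simp [segreCubic, pderiv_mul, pderiv_pow, Pi.single_apply] <;> ring

lemma segre_aux2 (t : ℂ) (i : Fin 5) :
    eval (t • (![1, 0, 2, -2, -2] : Fin 5 → ℂ)) (pderiv i segreCubic) = 0 := by
  fin_cases i <;>
    simp [segreCubic, pderiv_mul, pderiv_pow, Pi.single_apply] <;> ring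

lemma segre_aux3 (t : ℂ) (i : Fin 5) :
    eval (t • (![1, 0, 2, 2, 2] : Fin 5 → ℂ)) (pderiv i segreCubic) = 0 := by
  fin_cases i <;>
    simp [segreCubic, pderiv_mul, pderiv_pow, Pi.single_apply] <;> ring

lemma segre_aux4 (t : ℂ) (i : Fin 5) :
    eval (t • (![0, -2, 1, 0, 0] : Fin 5 → ℂ)) (pderiv i segreCubic) = 0 := by
  fin_cases i <;>
    simp [segreCubic, pderiv_mul, pderiv_pow, Pi.single_apply] <;> ring

lemma segre_aux5 (t : ℂ) (i : Fin 5) :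
    eval (t • (![0, 2, 1, 0, 0] : Fin 5 → ℂ)) (pderiv i segreCubic) = 0 := by
  fin_cases i <;>
    simp [segreCubic, pderiv_mul, pderiv_pow, Pi.single_apply] <;> ring

lemma segre_aux6 (t : ℂ) (i : Fin 5) :
    eval (t • (![0, -2, 0, 1, 0] : Fin 5 → ℂ)) (pderiv i segreCubic) = 0 := by
  fin_cases i <;>
    simp [segreCubic, pderiv_mul, pderiv_pow, Pi.single_apply] <;> ring

lemma segre_aux7 (t : ℂ) (i : Fin 5) :
    eval (t • (![0, 2, 0, 1, 0] : Fin 5 → ℂ)) (pderiv i segreCubic) = 0 := by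
  fin_cases i <;>
    simp [segreCubic, pderiv_mul, pderiv_pow, Pi.single_apply] <;> ring

lemma segre_aux8 (t : ℂ) (i : Fin 5) :
    eval (t • (![0, -2, 0, 0, 1] : Fin 5 → ℂ)) (pderiv i segreCubic) = 0 := by
  fin_cases i <;>
    simp [segreCubic, pderiv_mul, pderiv_pow, Pi.single_apply] <;> ring

lemma segre_aux9 (t : ℂ) (i : Fin 5) :
    eval (t • (![0, 2, 0, 0, 1] : Fin 5 → ℂ)) (pderiv i segreCubic) = 0 := by
  fin_cases i <;>
    simp [segreCubic, pderiv_mul, pderiv_pow, Pi.single_apply] <;> ring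

/-- For a nonzero `v ∈ ℂ⁵`, all five partial derivatives of `Δ` vanish at `v` iff `v` is
a nonzero scalar multiple of one of the ten listed vectors; i.e. the Segre cubic
`{Δ = 0} ⊂ ℙ⁴(ℂ)` has exactly these ten singular points. -/
theorem segreCubic_singular_points (v : Fin 5 → ℂ) (hv : v ≠ 0) :
    (∀ i, eval v (pderiv i segreCubic) = 0) ↔
      ∃ t : ℂ, t ≠ 0 ∧
        (v = t • ![1, 0, -2, -2, 2] ∨ v = t • ![1, 0, -2, 2, -2] ∨
          v = t • ![1, 0, 2, -2, -2] ∨ v = t • ![1, 0, 2, 2, 2] ∨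
          v = t • ![0, -2, 1, 0, 0] ∨ v = t • ![0, 2, 1, 0, 0] ∨
          v = t • ![0, -2, 0, 1, 0] ∨ v = t • ![0, 2, 0, 1, 0] ∨
          v = t • ![0, -2, 0, 0, 1] ∨ v = t • ![0, 2, 0, 0, 1]) := by
  have e0 : eval v (pderiv 0 segreCubic)
      = 48*(v 0)^2 + (v 1)^2 - 4*((v 2)^2+(v 3)^2+(v 4)^2) := by
    simp [segreCubic, pderiv_mul, pderiv_pow, Pi.single_apply]; ring
  have e1 : eval v (pderiv 1 segreCubic) = 2 * v 0 * v 1 := by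
    simp [segreCubic, pderiv_mul, pderiv_pow, Pi.single_apply]; ring
  have e2 : eval v (pderiv 2 segreCubic) = -8 * v 0 * v 2 + 4 * v 3 * v 4 := by
    simp [segreCubic, pderiv_mul, pderiv_pow, Pi.single_apply]; ring
  have e3 : eval v (pderiv 3 segreCubic) = -8 * v 0 * v 3 + 4 * v 2 * v 4 := by
    simp [segreCubic, pderiv_mul, pderiv_pow, Pi.single_apply]; ring
  have e4 : eval v (pderiv 4 segreCubic) = -8 * v 0 * v 4 + 4 * v 2 * v 3 := by
    simp [segreCubic, pderiv_mul, pderiv_pow, Pi.single_apply]; ring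
  constructor
  · intro H
    have h0 : 48*(v 0)^2 + (v 1)^2 - 4*((v 2)^2+(v 3)^2+(v 4)^2) = 0 := by rw [← e0]; exact H 0
    have h1 : 2 * v 0 * v 1 = 0 := by rw [← e1]; exact H 1
    have h2 : -8 * v 0 * v 2 + 4 * v 3 * v 4 = 0 := by rw [← e2]; exact H 2
    have h3 : -8 * v 0 * v 3 + 4 * v 2 * v 4 = 0 := by rw [← e3]; exact H 3
    have h4 : -8 * v 0 * v 4 + 4 * v 2 * v 3 = 0 := by rw [← e4]; exact H 4
    by_cases ha : v 0 = 0
    · -- A = 0 case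
      have hde : v 3 * v 4 = 0 := by linear_combination (1/4) * h2 + (2 * v 2) * ha
      have hce : v 2 * v 4 = 0 := by linear_combination (1/4) * h3 + (2 * v 3) * ha
      have hcd : v 2 * v 3 = 0 := by linear_combination (1/4) * h4 + (2 * v 4) * ha
      by_cases hc : v 2 = 0
      · by_cases hd : v 3 = 0
        · by_cases he : v 4 = 0
          · exfalso; apply hv
            have hb : (v 1)^2 = 0 := by
              linear_combination h0 - 48 * v 0 * ha + 4 * v 2 * hc + 4 * v 3 * hd + 4 * v 4 * he
            have hb' : v 1 = 0 := by
              simpa using pow_eq_zero_iff (n := 2) (by norm_num) |>.mp hb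
            funext i; fin_cases i <;> simp [ha, hb', hc, hd, he]
          · -- E ≠ 0, C = D = 0
            have hbe : (v 1)^2 = (2 * v 4)^2 := by
              linear_combination h0 - 48 * v 0 * ha + 4 * v 2 * hc + 4 * v 3 * hd
            refine ⟨v 4, he, ?_⟩
            rcases segre_sq_cases _ _ hbe with hb | hb
            · right; right; right; right; right; right; right; right; right
              exact segre_vec_eq v _ _ _ _ _ _ (by linear_combination ha)
                (by linear_combination hb) (by linear_combination hc)
                (by linear_combination hd) (by ring)
            · right; right; right; right; right; right; right; right; left
              exact segre_vec_eq v _ _ _ _ _ _ (by linear_combination ha)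
                (by linear_combination hb) (by linear_combination hc)
                (by linear_combination hd) (by ring)
        · -- D ≠ 0, C = 0, hence E = 0
          have he : v 4 = 0 := (mul_eq_zero.mp hde).resolve_left hd
          have hbd : (v 1)^2 = (2 * v 3)^2 := by
            linear_combination h0 - 48 * v 0 * ha + 4 * v 2 * hc + 4 * v 4 * he
          refine ⟨v 3, hd, ?_⟩
          rcases segre_sq_cases _ _ hbd with hb | hb
          · right; right; right; right; right; right; right; left
            exact segre_vec_eq v _ _ _ _ _ _ (by linear_combination ha)
              (by linear_combination hb) (by linear_combination hc) (by ring)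
              (by linear_combination he)
          · right; right; right; right; right; right; left
            exact segre_vec_eq v _ _ _ _ _ _ (by linear_combination ha)
              (by linear_combination hb) (by linear_combination hc) (by ring)
              (by linear_combination he)
      · -- C ≠ 0, hence D = E = 0
        have hd : v 3 = 0 := (mul_eq_zero.mp hcd).resolve_left hc
        have he : v 4 = 0 := (mul_eq_zero.mp hce).resolve_left hc
        have hbc : (v 1)^2 = (2 * v 2)^2 := by
          linear_combination h0 - 48 * v 0 * ha + 4 * v 3 * hd + 4 * v 4 * he
        refine ⟨v 2, hc, ?_⟩
        rcases segre_sq_cases _ _ hbc with hb | hb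
        · right; right; right; right; right; left
          exact segre_vec_eq v _ _ _ _ _ _ (by linear_combination ha)
            (by linear_combination hb) (by ring) (by linear_combination hd)
            (by linear_combination he)
        · right; right; right; right; left
          exact segre_vec_eq v _ _ _ _ _ _ (by linear_combination ha)
            (by linear_combination hb) (by ring) (by linear_combination hd)
            (by linear_combination he)
    · -- A ≠ 0 case
      have h2a : (2 : ℂ) * v 0 ≠ 0 := by
        intro h; rcases mul_eq_zero.mp h with h' | h'
        · exact two_ne_zero h'
        · exact ha h'
      have hb : v 1 = 0 := by
        rcases mul_eq_zero.mp h1 with h | h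
        · exact absurd h h2a
        · exact h
      have hc2 : 2 * v 0 * (v 2)^2 = v 2 * v 3 * v 4 := by linear_combination (-(v 2)/4) * h2
      have hd2 : 2 * v 0 * (v 3)^2 = v 2 * v 3 * v 4 := by linear_combination (-(v 3)/4) * h3
      have he2 : 2 * v 0 * (v 4)^2 = v 2 * v 3 * v 4 := by linear_combination (-(v 4)/4) * h4
      have hcd : (v 2)^2 = (v 3)^2 :=
        mul_left_cancel₀ h2a (by linear_combination hc2 - hd2)
      have hce : (v 2)^2 = (v 4)^2 :=
        mul_left_cancel₀ h2a (by linear_combination hc2 - he2)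
      have hc4 : (v 2)^2 = (2 * v 0)^2 := by
        have h12 : (12 : ℂ) ≠ 0 := by norm_num
        apply mul_left_cancel₀ h12
        linear_combination -h0 + v 1 * hb + 4 * hcd + 4 * hce
      rcases segre_sq_cases _ _ hc4 with hc | hc <;>
        rcases segre_sq_cases _ _ (hcd ▸ hc4 : (v 3)^2 = (2 * v 0)^2) with hd | hd <;>
          rcases segre_sq_cases _ _ (hce ▸ hc4 : (v 4)^2 = (2 * v 0)^2) with he | he
      · -- c=2a, d=2a, e=2a : vector (1,0,2,2,2)
        refine ⟨v 0, ha, ?_⟩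
        right; right; right; left
        exact segre_vec_eq v _ _ _ _ _ _ (by ring) (by linear_combination hb)
          (by linear_combination hc) (by linear_combination hd) (by linear_combination he)
      · -- c=2a, d=2a, e=-2a : contradiction
        exfalso; apply ha
        have h5 : (v 0)^2 = 0 := by
          linear_combination (-1/32)*h2 + (-(v 0)/4)*hc + (-(v 0)/4)*hd + ((v 3)/8)*he
        simpa using pow_eq_zero_iff (n := 2) (by norm_num) |>.mp h5
      · -- c=2a, d=-2a, e=2a : contradiction
        exfalso; apply ha
        have h5 : (v 0)^2 = 0 := by
          linear_combination (-1/32)*h2 + (-(v 0)/4)*hc + ((v 0)/4)*hd + ((v 3)/8)*he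
        simpa using pow_eq_zero_iff (n := 2) (by norm_num) |>.mp h5
      · -- c=2a, d=-2a, e=-2a : vector (1,0,2,-2,-2)
        refine ⟨v 0, ha, ?_⟩
        right; right; left
        exact segre_vec_eq v _ _ _ _ _ _ (by ring) (by linear_combination hb)
          (by linear_combination hc) (by linear_combination hd) (by linear_combination he)
      · -- c=-2a, d=2a, e=2a : contradiction
        exfalso; apply ha
        have h5 : (v 0)^2 = 0 := by
          linear_combination (1/32)*h2 + ((v 0)/4)*hc + (-(v 0)/4)*hd + (-(v 3)/8)*he
        simpa using pow_eq_zero_iff (n := 2) (by norm_num) |>.mp h5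
      · -- c=-2a, d=2a, e=-2a : vector (1,0,-2,2,-2)
        refine ⟨v 0, ha, ?_⟩
        right; left
        exact segre_vec_eq v _ _ _ _ _ _ (by ring) (by linear_combination hb)
          (by linear_combination hc) (by linear_combination hd) (by linear_combination he)
      · -- c=-2a, d=-2a, e=2a : vector (1,0,-2,-2,2)
        refine ⟨v 0, ha, ?_⟩
        left
        exact segre_vec_eq v _ _ _ _ _ _ (by ring) (by linear_combination hb)
          (by linear_combination hc) (by linear_combination hd) (by linear_combination he)
      · -- c=-2a, d=-2a, e=-2a : contradiction
        exfalso; apply ha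
        have h5 : (v 0)^2 = 0 := by
          linear_combination (1/32)*h2 + ((v 0)/4)*hc + ((v 0)/4)*hd + (-(v 3)/8)*he
        simpa using pow_eq_zero_iff (n := 2) (by norm_num) |>.mp h5
  · rintro ⟨t, ht, h | h | h | h | h | h | h | h | h | h⟩ <;> subst h <;> intro i
    · exact segre_aux0 t i
    · exact segre_aux1 t i
    · exact segre_aux2 t i
    · exact segre_aux3 t i
    · exact segre_aux4 t i
    · exact segre_aux5 t i
    · exact segre_aux6 t i
    · exact segre_aux7 t i
    · exact segre_aux8 t i
    · exact segre_aux9 t i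
end

section
/- Let Ω be the subgroup of PGL₄(ℂ) × PGL₅(ℂ) generated by the five pairs (ḡᵢ, h̄ᵢ), i = 1,…,5, where: g₁ = diag(1,1,1,−1) and h₁ = diag(1,−1,1,1,1); g₂ is the permutation matrix swapping the 3rd and 4th coordinates and h₂ is the permutation matrix swapping the 4th and 5th coordinates; g₃ is the permutation matrix swapping the 2nd and 3rd coordinates and h₃ is the permutation matrix swapping the 3rd and 4th coordinates; g₄ = diag(1,1,i,i) and h₄ = diag(1,−1,1,−1,−1); g₅ is the matrix of (x,y,z,w) ↦ (x−y, x+y, z−w, z+w) and h₅ is the matrix of (A,B,C,D,E) ↦ (2A+C, 8(D−E), 12A−2C, B+2D+2E, −B+2D+2E). Then the centre of Ω is trivial; in particular Ω is not isomorphic to the direct product (ℤ/2ℤ)⁴ × S₆. -/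
open Matrix

/-- The subgroup of nonzero scalar matrices in `GLₙ(ℂ)`. -/
noncomputable def scalarUnits (n : ℕ) : Subgroup (GL (Fin n) ℂ) :=
  (Units.map (algebraMap ℂ (Matrix (Fin n) (Fin n) ℂ)).toMonoidHom).range

instance scalarUnits_normal (n : ℕ) : (scalarUnits n).Normal := by
  constructor
  rintro s hs g
  obtain ⟨c, rfl⟩ := hs
  refine ⟨c, Units.ext ?_⟩
  simp only [Units.coe_map, Units.val_mul, MonoidHom.coe_coe, RingHom.toMonoidHom_eq_coe]
  rw [← Algebra.commutes, mul_assoc, Units.mul_inv, mul_one]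

/-- `PGLₙ(ℂ)`, the quotient of `GLₙ(ℂ)` by its subgroup of nonzero scalar matrices. -/
noncomputable def PGL (n : ℕ) : Type :=
  GL (Fin n) ℂ ⧸ scalarUnits n

noncomputable instance (n : ℕ) : Group (PGL n) :=
  inferInstanceAs (Group (GL (Fin n) ℂ ⧸ scalarUnits n))

/-- The natural projection `GLₙ(ℂ) → PGLₙ(ℂ)`. -/
noncomputable def toPGL (n : ℕ) : GL (Fin n) ℂ →* PGL n :=
  QuotientGroup.mk' (scalarUnits n)

/-- `g₁ = diag(1,1,1,−1)`. -/
noncomputable def g₁ : GL (Fin 4) ℂ :=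
  Matrix.GeneralLinearGroup.mkOfDetNeZero !![1,0,0,0; 0,1,0,0; 0,0,1,0; 0,0,0,-1]
    (by simp +decide [Matrix.det_succ_row_zero, Fin.sum_univ_succ, Fin.succAbove] <;> norm_num)

/-- `g₂`, the permutation matrix swapping the 3rd and 4th coordinates. -/
noncomputable def g₂ : GL (Fin 4) ℂ :=
  Matrix.GeneralLinearGroup.mkOfDetNeZero !![1,0,0,0; 0,1,0,0; 0,0,0,1; 0,0,1,0]
    (by simp +decide [Matrix.det_succ_row_zero, Fin.sum_univ_succ, Fin.succAbove] <;> norm_num)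

/-- `g₃`, the permutation matrix swapping the 2nd and 3rd coordinates. -/
noncomputable def g₃ : GL (Fin 4) ℂ :=
  Matrix.GeneralLinearGroup.mkOfDetNeZero !![1,0,0,0; 0,0,1,0; 0,1,0,0; 0,0,0,1]
    (by simp +decide [Matrix.det_succ_row_zero, Fin.sum_univ_succ, Fin.succAbove] <;> norm_num)

/-- `g₄ = diag(1,1,i,i)`. -/
noncomputable def g₄ : GL (Fin 4) ℂ :=
  Matrix.GeneralLinearGroup.mkOfDetNeZero
    !![1,0,0,0; 0,1,0,0; 0,0,Complex.I,0; 0,0,0,Complex.I]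
    (by simp +decide [Matrix.det_succ_row_zero, Fin.sum_univ_succ, Fin.succAbove] <;> norm_num)

/-- `g₅`, the matrix of `(x,y,z,w) ↦ (x−y, x+y, z−w, z+w)`. -/
noncomputable def g₅ : GL (Fin 4) ℂ :=
  Matrix.GeneralLinearGroup.mkOfDetNeZero !![1,-1,0,0; 1,1,0,0; 0,0,1,-1; 0,0,1,1]
    (by simp +decide [Matrix.det_succ_row_zero, Fin.sum_univ_succ, Fin.succAbove] <;> norm_num)

/-- `h₁ = diag(1,−1,1,1,1)`. -/
noncomputable def h₁ : GL (Fin 5) ℂ :=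
  Matrix.GeneralLinearGroup.mkOfDetNeZero
    !![1,0,0,0,0; 0,-1,0,0,0; 0,0,1,0,0; 0,0,0,1,0; 0,0,0,0,1]
    (by simp +decide [Matrix.det_succ_row_zero, Fin.sum_univ_succ, Fin.succAbove] <;> norm_num)

/-- `h₂`, the permutation matrix swapping the 4th and 5th coordinates. -/
noncomputable def h₂ : GL (Fin 5) ℂ :=
  Matrix.GeneralLinearGroup.mkOfDetNeZero
    !![1,0,0,0,0; 0,1,0,0,0; 0,0,1,0,0; 0,0,0,0,1; 0,0,0,1,0]
    (by simp +decide [Matrix.det_succ_row_zero, Fin.sum_univ_succ, Fin.succAbove] <;> norm_num)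

/-- `h₃`, the permutation matrix swapping the 3rd and 4th coordinates. -/
noncomputable def h₃ : GL (Fin 5) ℂ :=
  Matrix.GeneralLinearGroup.mkOfDetNeZero
    !![1,0,0,0,0; 0,1,0,0,0; 0,0,0,1,0; 0,0,1,0,0; 0,0,0,0,1]
    (by simp +decide [Matrix.det_succ_row_zero, Fin.sum_univ_succ, Fin.succAbove] <;> norm_num)

/-- `h₄ = diag(1,−1,1,−1,−1)`. -/
noncomputable def h₄ : GL (Fin 5) ℂ :=
  Matrix.GeneralLinearGroup.mkOfDetNeZero
    !![1,0,0,0,0; 0,-1,0,0,0; 0,0,1,0,0; 0,0,0,-1,0; 0,0,0,0,-1]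
    (by simp +decide [Matrix.det_succ_row_zero, Fin.sum_univ_succ, Fin.succAbove] <;> norm_num)

/-- `h₅`, the matrix of `(A,B,C,D,E) ↦ (2A+C, 8(D−E), 12A−2C, B+2D+2E, −B+2D+2E)`. -/
noncomputable def h₅ : GL (Fin 5) ℂ :=
  Matrix.GeneralLinearGroup.mkOfDetNeZero
    !![2,0,1,0,0; 0,0,0,8,-8; 12,0,-2,0,0; 0,1,0,2,2; 0,-1,0,2,2]
    (by simp +decide [Matrix.det_succ_row_zero, Fin.sum_univ_succ, Fin.succAbove] <;> norm_num)

/-- The group `Ω ≤ PGL₄(ℂ) × PGL₅(ℂ)` generated by the pairs `(ḡᵢ, h̄ᵢ)`. -/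
noncomputable def Ω : Subgroup (PGL 4 × PGL 5) :=
  Subgroup.closure {(toPGL 4 g₁, toPGL 5 h₁), (toPGL 4 g₂, toPGL 5 h₂),
    (toPGL 4 g₃, toPGL 5 h₃), (toPGL 4 g₄, toPGL 5 h₄), (toPGL 4 g₅, toPGL 5 h₅)}


/-! ### Auxiliary lemmas -/

private lemma conj_comm' {α : Type*} [Ring α] (A P M : α) (hP : A*P = P*A) (hM : A*M = M*A) :
    A*(P*M*P) = P*M*P*A := by
  rw [← mul_assoc, ← mul_assoc, hP, mul_assoc P A M, hM, ← mul_assoc, mul_assoc _ A P, hP,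
    ← mul_assoc]

/-- If two elements of `GL n ℂ` commute in `PGL n` and the second has nonzero trace, then
they commute on the nose. -/
private lemma comm_lift {n : ℕ} (A g : GL (Fin n) ℂ)
    (h : toPGL n A * toPGL n g = toPGL n g * toPGL n A)
    (htr : Matrix.trace (g : Matrix (Fin n) (Fin n) ℂ) ≠ 0) :
    (A : Matrix (Fin n) (Fin n) ℂ) * g = (g : Matrix (Fin n) (Fin n) ℂ) * A := by
  rw [← _root_.map_mul, ← _root_.map_mul] at h
  rw [toPGL] at h
  obtain ⟨s, ⟨c, rfl⟩, hs⟩ := (QuotientGroup.mk'_eq_mk' (N := scalarUnits n)).mp h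
  have hs' := congrArg Units.val hs
  simp only [Units.val_mul, Units.coe_map, MonoidHom.coe_coe, RingHom.toMonoidHom_eq_coe] at hs'
  rw [Algebra.algebraMap_eq_smul_one] at hs'
  have hc : (c : ℂ) = 1 := by
    have h2 := congrArg
      (fun M => Matrix.trace (M * ((A⁻¹ : GL (Fin n) ℂ) : Matrix (Fin n) (Fin n) ℂ))) hs'
    simp only [Matrix.mul_smul, Matrix.smul_mul, Matrix.trace_smul, one_mul, mul_one,
      Matrix.mul_one] at h2
    rw [mul_assoc, mul_assoc] at h2
    rw [Matrix.trace_mul_comm ((A : Matrix (Fin n) (Fin n) ℂ))] at h2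
    rw [Matrix.trace_mul_comm ((g : Matrix (Fin n) (Fin n) ℂ))] at h2
    have hAA : ((A⁻¹ : GL (Fin n) ℂ) : Matrix (Fin n) (Fin n) ℂ) * A = 1 := by
      have := congrArg Units.val (inv_mul_cancel A)
      simp only [Units.val_mul, Units.val_one] at this
      exact this
    have hAA' : (A : Matrix (Fin n) (Fin n) ℂ) * ((A⁻¹ : GL (Fin n) ℂ) : Matrix (Fin n) (Fin n) ℂ) = 1 := by
      have := congrArg Units.val (mul_inv_cancel A)
      simp only [Units.val_mul, Units.val_one] at this
      exact this
    rw [mul_assoc] at h2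
    rw [hAA, hAA', mul_one, one_mul, smul_eq_mul] at h2
    exact mul_right_cancel₀ htr (h2.trans (one_mul _).symm)
  rw [hc] at hs'
  simpa using hs'

private lemma mem_scalarUnits_of_eq_smul_one (n : ℕ) [NeZero n] (A : GL (Fin n) ℂ) (c : ℂ)
    (h : (A : Matrix (Fin n) (Fin n) ℂ) = c • 1) : A ∈ scalarUnits n := by
  have hc : c ≠ 0 := by
    rintro rfl
    have hd : IsUnit ((A : Matrix (Fin n) (Fin n) ℂ).det) :=
      ⟨Matrix.GeneralLinearGroup.det A, rfl⟩
    rw [h] at hd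
    simp at hd
  refine ⟨Units.mk0 c hc, Units.ext ?_⟩
  simp [h, Algebra.algebraMap_eq_smul_one]

set_option maxHeartbeats 2000000 in
private lemma comm4 (A : Matrix (Fin 4) (Fin 4) ℂ)
    (h1 : A * !![1,0,0,0; 0,1,0,0; 0,0,1,0; 0,0,0,-1] = !![1,0,0,0; 0,1,0,0; 0,0,1,0; 0,0,0,-1] * A)
    (h2 : A * !![1,0,0,0; 0,1,0,0; 0,0,0,1; 0,0,1,0] = !![1,0,0,0; 0,1,0,0; 0,0,0,1; 0,0,1,0] * A)
    (h3 : A * !![1,0,0,0; 0,0,1,0; 0,1,0,0; 0,0,0,1] = !![1,0,0,0; 0,0,1,0; 0,1,0,0; 0,0,0,1] * A)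
    (h5 : A * !![1,-1,0,0; 1,1,0,0; 0,0,1,-1; 0,0,1,1] = !![1,-1,0,0; 1,1,0,0; 0,0,1,-1; 0,0,1,1] * A) :
    A = A 0 0 • 1 := by
  have hD2 : A * !![1,0,0,0; 0,1,0,0; 0,0,-1,0; 0,0,0,1] = !![(1:ℂ),0,0,0; 0,1,0,0; 0,0,-1,0; 0,0,0,1] * A := by
    have e : (!![(1:ℂ),0,0,0; 0,1,0,0; 0,0,-1,0; 0,0,0,1]) =
        !![1,0,0,0; 0,1,0,0; 0,0,0,1; 0,0,1,0] * !![1,0,0,0; 0,1,0,0; 0,0,1,0; 0,0,0,-1] * !![1,0,0,0; 0,1,0,0; 0,0,0,1; 0,0,1,0] := by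
      ext i j; fin_cases i <;> fin_cases j <;>
        simp [Matrix.mul_apply, Fin.sum_univ_succ, Matrix.vecHead, Matrix.vecTail]
    rw [e]; exact conj_comm' A _ _ h2 h1
  have hD3 : A * !![1,0,0,0; 0,-1,0,0; 0,0,1,0; 0,0,0,1] = !![(1:ℂ),0,0,0; 0,-1,0,0; 0,0,1,0; 0,0,0,1] * A := by
    have e : (!![(1:ℂ),0,0,0; 0,-1,0,0; 0,0,1,0; 0,0,0,1]) =
        !![1,0,0,0; 0,0,1,0; 0,1,0,0; 0,0,0,1] * !![1,0,0,0; 0,1,0,0; 0,0,-1,0; 0,0,0,1] * !![1,0,0,0; 0,0,1,0; 0,1,0,0; 0,0,0,1] := by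
      ext i j; fin_cases i <;> fin_cases j <;>
        simp [Matrix.mul_apply, Fin.sum_univ_succ, Matrix.vecHead, Matrix.vecTail]
    rw [e]; exact conj_comm' A _ _ h3 hD2
  have s1 : (Fin.succ 0 : Fin 4) = 1 := rfl
  have s2 : (Fin.succ 1 : Fin 4) = 2 := rfl
  have s3 : (Fin.succ 2 : Fin 4) = 3 := rfl
  have z03 := congrFun (congrFun h1 0) 3
  have z13 := congrFun (congrFun h1 1) 3
  have z23 := congrFun (congrFun h1 2) 3
  have z30 := congrFun (congrFun h1 3) 0
  have z31 := congrFun (congrFun h1 3) 1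
  have z32 := congrFun (congrFun h1 3) 2
  have z02 := congrFun (congrFun hD2 0) 2
  have z12 := congrFun (congrFun hD2 1) 2
  have z20 := congrFun (congrFun hD2 2) 0
  have z21 := congrFun (congrFun hD2 2) 1
  have z01 := congrFun (congrFun hD3 0) 1
  have z10 := congrFun (congrFun hD3 1) 0
  have d12 := congrFun (congrFun h3 1) 2
  have d23 := congrFun (congrFun h2 2) 3
  have d01 := congrFun (congrFun h5 0) 1
  simp [Matrix.mul_apply, Fin.sum_univ_succ, Matrix.vecHead, Matrix.vecTail, s1, s2, s3]
    at z03 z13 z23 z30 z31 z32 z02 z12 z20 z21 z01 z10 d12 d23 d01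
  have z03' : A 0 3 = 0 := by linear_combination -z03/2
  have z13' : A 1 3 = 0 := by linear_combination -z13/2
  have z23' : A 2 3 = 0 := by linear_combination -z23/2
  have z30' : A 3 0 = 0 := by linear_combination z30/2
  have z31' : A 3 1 = 0 := by linear_combination z31/2
  have z32' : A 3 2 = 0 := by linear_combination z32/2
  have z02' : A 0 2 = 0 := by linear_combination -z02/2
  have z12' : A 1 2 = 0 := by linear_combination -z12/2
  have z20' : A 2 0 = 0 := by linear_combination z20/2
  have z21' : A 2 1 = 0 := by linear_combination z21/2
  have z01' : A 0 1 = 0 := by linear_combination -z01/2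
  have z10' : A 1 0 = 0 := by linear_combination z10/2
  have e11 : A 1 1 = A 0 0 := by linear_combination d01
  have e22 : A 2 2 = A 0 0 := by linear_combination d01 - d12
  have e33 : A 3 3 = A 0 0 := by linear_combination d01 - d12 - d23
  ext i j
  fin_cases i <;> fin_cases j <;>
    simp [Matrix.one_apply, z03', z13', z23', z30', z31', z32', z02', z12', z20', z21',
      z01', z10', e11, e22, e33]

set_option maxHeartbeats 2000000 in
private lemma comm5 (A : Matrix (Fin 5) (Fin 5) ℂ)
    (h1 : A * !![1,0,0,0,0; 0,-1,0,0,0; 0,0,1,0,0; 0,0,0,1,0; 0,0,0,0,1] = !![1,0,0,0,0; 0,-1,0,0,0; 0,0,1,0,0; 0,0,0,1,0; 0,0,0,0,1] * A)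
    (h2 : A * !![1,0,0,0,0; 0,1,0,0,0; 0,0,1,0,0; 0,0,0,0,1; 0,0,0,1,0] = !![1,0,0,0,0; 0,1,0,0,0; 0,0,1,0,0; 0,0,0,0,1; 0,0,0,1,0] * A)
    (h3 : A * !![1,0,0,0,0; 0,1,0,0,0; 0,0,0,1,0; 0,0,1,0,0; 0,0,0,0,1] = !![1,0,0,0,0; 0,1,0,0,0; 0,0,0,1,0; 0,0,1,0,0; 0,0,0,0,1] * A)
    (h4 : A * !![1,0,0,0,0; 0,-1,0,0,0; 0,0,1,0,0; 0,0,0,-1,0; 0,0,0,0,-1] = !![1,0,0,0,0; 0,-1,0,0,0; 0,0,1,0,0; 0,0,0,-1,0; 0,0,0,0,-1] * A)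
    (h5 : A * !![2,0,1,0,0; 0,0,0,8,-8; 12,0,-2,0,0; 0,1,0,2,2; 0,-1,0,2,2] = !![2,0,1,0,0; 0,0,0,8,-8; 12,0,-2,0,0; 0,1,0,2,2; 0,-1,0,2,2] * A) :
    A = A 0 0 • 1 := by
  have hD : A * !![1,0,0,0,0; 0,-1,0,0,0; 0,0,-1,0,0; 0,0,0,1,0; 0,0,0,0,-1] = !![(1:ℂ),0,0,0,0; 0,-1,0,0,0; 0,0,-1,0,0; 0,0,0,1,0; 0,0,0,0,-1] * A := by
    have e : (!![(1:ℂ),0,0,0,0; 0,-1,0,0,0; 0,0,-1,0,0; 0,0,0,1,0; 0,0,0,0,-1]) =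
        !![1,0,0,0,0; 0,1,0,0,0; 0,0,0,1,0; 0,0,1,0,0; 0,0,0,0,1] * !![1,0,0,0,0; 0,-1,0,0,0; 0,0,1,0,0; 0,0,0,-1,0; 0,0,0,0,-1] * !![1,0,0,0,0; 0,1,0,0,0; 0,0,0,1,0; 0,0,1,0,0; 0,0,0,0,1] := by
      ext i j; fin_cases i <;> fin_cases j <;>
        simp [Matrix.mul_apply, Fin.sum_univ_succ, Matrix.vecHead, Matrix.vecTail]
    rw [e]; exact conj_comm' A _ _ h3 h4
  have s1 : (Fin.succ 0 : Fin 5) = 1 := rfl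
  have s2 : (Fin.succ 1 : Fin 5) = 2 := rfl
  have s3 : (Fin.succ 2 : Fin 5) = 3 := rfl
  have s4 : (Fin.succ 3 : Fin 5) = 4 := rfl
  have s5 : (Fin.succ (Fin.succ (2 : Fin 3)) : Fin 5) = 4 := rfl
  have z01 := congrFun (congrFun h1 0) 1
  have z21 := congrFun (congrFun h1 2) 1
  have z31 := congrFun (congrFun h1 3) 1
  have z41 := congrFun (congrFun h1 4) 1
  have z10 := congrFun (congrFun h1 1) 0
  have z12 := congrFun (congrFun h1 1) 2
  have z13 := congrFun (congrFun h1 1) 3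
  have z14 := congrFun (congrFun h1 1) 4
  have z03 := congrFun (congrFun h4 0) 3
  have z04 := congrFun (congrFun h4 0) 4
  have z23 := congrFun (congrFun h4 2) 3
  have z24 := congrFun (congrFun h4 2) 4
  have z30 := congrFun (congrFun h4 3) 0
  have z40 := congrFun (congrFun h4 4) 0
  have z32 := congrFun (congrFun h4 3) 2
  have z42 := congrFun (congrFun h4 4) 2
  have z02 := congrFun (congrFun hD 0) 2
  have z20 := congrFun (congrFun hD 2) 0
  have z34 := congrFun (congrFun hD 3) 4
  have z43 := congrFun (congrFun hD 4) 3
  have d23 := congrFun (congrFun h3 2) 3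
  have d34 := congrFun (congrFun h2 3) 4
  have d02 := congrFun (congrFun h5 0) 2
  have d13 := congrFun (congrFun h5 1) 3
  simp [Matrix.mul_apply, Fin.sum_univ_succ, Matrix.vecHead, Matrix.vecTail, s1, s2, s3, s4, s5]
    at z01 z21 z31 z41 z10 z12 z13 z14 z03 z04 z23 z24 z30 z40 z32 z42 z02 z20 z34 z43 d23 d34 d02 d13
  have z01' : A 0 1 = 0 := by linear_combination -z01/2
  have z21' : A 2 1 = 0 := by linear_combination -z21/2
  have z31' : A 3 1 = 0 := by linear_combination -z31/2
  have z41' : A 4 1 = 0 := by linear_combination -z41/2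
  have z03' : A 0 3 = 0 := by linear_combination -z03/2
  have z04' : A 0 4 = 0 := by linear_combination -z04/2
  have z23' : A 2 3 = 0 := by linear_combination -z23/2
  have z24' : A 2 4 = 0 := by linear_combination -z24/2
  have z02' : A 0 2 = 0 := by linear_combination -z02/2
  have z34' : A 3 4 = 0 := by linear_combination -z34/2
  have z10' : A 1 0 = 0 := by linear_combination z10/2
  have z12' : A 1 2 = 0 := by linear_combination z12/2
  have z13' : A 1 3 = 0 := by linear_combination z13/2
  have z14' : A 1 4 = 0 := by linear_combination z14/2
  have z30' : A 3 0 = 0 := by linear_combination z30/2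
  have z40' : A 4 0 = 0 := by linear_combination z40/2
  have z32' : A 3 2 = 0 := by linear_combination z32/2
  have z42' : A 4 2 = 0 := by linear_combination z42/2
  have z20' : A 2 0 = 0 := by linear_combination z20/2
  have z43' : A 4 3 = 0 := by linear_combination z43/2
  have e22 : A 2 2 = A 0 0 := by linear_combination -d02 - 4*z02'
  have e33 : A 3 3 = A 0 0 := by linear_combination e22 - d23
  have e44 : A 4 4 = A 0 0 := by linear_combination e33 - d34
  have e11 : A 1 1 = A 0 0 := by linear_combination d13/8 - z13'/4 - z14'/4 - z43' + e33
  ext i j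
  fin_cases i <;> fin_cases j <;>
    simp [Matrix.one_apply, z01', z21', z31', z41', z03', z04', z23', z24', z02', z34',
      z10', z12', z13', z14', z30', z40', z32', z42', z20', z43', e11, e22, e33, e44]

set_option maxHeartbeats 2000000 in
/-- The centre of `Ω` is trivial; in particular `Ω` is not isomorphic to the direct
product `(ℤ/2ℤ)⁴ × S₆`. -/
theorem omega_center_trivial_and_not_product :
    Subgroup.center Ω = ⊥ ∧
      IsEmpty (Ω ≃* Multiplicative (ZMod 2 × ZMod 2 × ZMod 2 × ZMod 2) ×
        Equiv.Perm (Fin 6)) := by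
  have hcenter : Subgroup.center Ω = ⊥ := by
    rw [eq_bot_iff]
    rintro ⟨⟨a, b⟩, hab⟩ hz
    rw [Subgroup.mem_center_iff] at hz
    have m1 : (toPGL 4 g₁, toPGL 5 h₁) ∈ Ω := Subgroup.subset_closure (by simp)
    have m2 : (toPGL 4 g₂, toPGL 5 h₂) ∈ Ω := Subgroup.subset_closure (by simp)
    have m3 : (toPGL 4 g₃, toPGL 5 h₃) ∈ Ω := Subgroup.subset_closure (by simp)
    have m4 : (toPGL 4 g₄, toPGL 5 h₄) ∈ Ω := Subgroup.subset_closure (by simp)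
    have m5 : (toPGL 4 g₅, toPGL 5 h₅) ∈ Ω := Subgroup.subset_closure (by simp)
    have c1 := congrArg Subtype.val (hz ⟨_, m1⟩)
    have c2 := congrArg Subtype.val (hz ⟨_, m2⟩)
    have c3 := congrArg Subtype.val (hz ⟨_, m3⟩)
    have c4 := congrArg Subtype.val (hz ⟨_, m4⟩)
    have c5 := congrArg Subtype.val (hz ⟨_, m5⟩)
    have cA1 : toPGL 4 g₁ * a = a * toPGL 4 g₁ := congrArg Prod.fst c1
    have cA2 : toPGL 4 g₂ * a = a * toPGL 4 g₂ := congrArg Prod.fst c2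
    have cA3 : toPGL 4 g₃ * a = a * toPGL 4 g₃ := congrArg Prod.fst c3
    have cA5 : toPGL 4 g₅ * a = a * toPGL 4 g₅ := congrArg Prod.fst c5
    have cB1 : toPGL 5 h₁ * b = b * toPGL 5 h₁ := congrArg Prod.snd c1
    have cB2 : toPGL 5 h₂ * b = b * toPGL 5 h₂ := congrArg Prod.snd c2
    have cB3 : toPGL 5 h₃ * b = b * toPGL 5 h₃ := congrArg Prod.snd c3
    have cB4 : toPGL 5 h₄ * b = b * toPGL 5 h₄ := congrArg Prod.snd c4
    have cB5 : toPGL 5 h₅ * b = b * toPGL 5 h₅ := congrArg Prod.snd c5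
    obtain ⟨A, rfl⟩ := QuotientGroup.mk'_surjective (scalarUnits 4) a
    obtain ⟨B, rfl⟩ := QuotientGroup.mk'_surjective (scalarUnits 5) b
    have tr1 : Matrix.trace ((g₁ : Matrix (Fin 4) (Fin 4) ℂ)) ≠ 0 := by
      show Matrix.trace (!![1,0,0,0; 0,1,0,0; 0,0,1,0; 0,0,0,-1] : Matrix (Fin 4) (Fin 4) ℂ) ≠ 0
      norm_num [Matrix.trace, Fin.sum_univ_succ, Matrix.vecHead, Matrix.vecTail]
    have tr2 : Matrix.trace ((g₂ : Matrix (Fin 4) (Fin 4) ℂ)) ≠ 0 := by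
      show Matrix.trace (!![1,0,0,0; 0,1,0,0; 0,0,0,1; 0,0,1,0] : Matrix (Fin 4) (Fin 4) ℂ) ≠ 0
      norm_num [Matrix.trace, Fin.sum_univ_succ, Matrix.vecHead, Matrix.vecTail]
    have tr3 : Matrix.trace ((g₃ : Matrix (Fin 4) (Fin 4) ℂ)) ≠ 0 := by
      show Matrix.trace (!![1,0,0,0; 0,0,1,0; 0,1,0,0; 0,0,0,1] : Matrix (Fin 4) (Fin 4) ℂ) ≠ 0
      norm_num [Matrix.trace, Fin.sum_univ_succ, Matrix.vecHead, Matrix.vecTail]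
    have tr5 : Matrix.trace ((g₅ : Matrix (Fin 4) (Fin 4) ℂ)) ≠ 0 := by
      show Matrix.trace (!![1,-1,0,0; 1,1,0,0; 0,0,1,-1; 0,0,1,1] : Matrix (Fin 4) (Fin 4) ℂ) ≠ 0
      norm_num [Matrix.trace, Fin.sum_univ_succ, Matrix.vecHead, Matrix.vecTail]
    have sr1 : Matrix.trace ((h₁ : Matrix (Fin 5) (Fin 5) ℂ)) ≠ 0 := by
      show Matrix.trace (!![1,0,0,0,0; 0,-1,0,0,0; 0,0,1,0,0; 0,0,0,1,0; 0,0,0,0,1] : Matrix (Fin 5) (Fin 5) ℂ) ≠ 0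
      norm_num [Matrix.trace, Fin.sum_univ_succ, Matrix.vecHead, Matrix.vecTail]
    have sr2 : Matrix.trace ((h₂ : Matrix (Fin 5) (Fin 5) ℂ)) ≠ 0 := by
      show Matrix.trace (!![1,0,0,0,0; 0,1,0,0,0; 0,0,1,0,0; 0,0,0,0,1; 0,0,0,1,0] : Matrix (Fin 5) (Fin 5) ℂ) ≠ 0
      norm_num [Matrix.trace, Fin.sum_univ_succ, Matrix.vecHead, Matrix.vecTail]
    have sr3 : Matrix.trace ((h₃ : Matrix (Fin 5) (Fin 5) ℂ)) ≠ 0 := by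
      show Matrix.trace (!![1,0,0,0,0; 0,1,0,0,0; 0,0,0,1,0; 0,0,1,0,0; 0,0,0,0,1] : Matrix (Fin 5) (Fin 5) ℂ) ≠ 0
      norm_num [Matrix.trace, Fin.sum_univ_succ, Matrix.vecHead, Matrix.vecTail]
    have sr4 : Matrix.trace ((h₄ : Matrix (Fin 5) (Fin 5) ℂ)) ≠ 0 := by
      show Matrix.trace (!![1,0,0,0,0; 0,-1,0,0,0; 0,0,1,0,0; 0,0,0,-1,0; 0,0,0,0,-1] : Matrix (Fin 5) (Fin 5) ℂ) ≠ 0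
      norm_num [Matrix.trace, Fin.sum_univ_succ, Matrix.vecHead, Matrix.vecTail]
    have sr5 : Matrix.trace ((h₅ : Matrix (Fin 5) (Fin 5) ℂ)) ≠ 0 := by
      show Matrix.trace (!![2,0,1,0,0; 0,0,0,8,-8; 12,0,-2,0,0; 0,1,0,2,2; 0,-1,0,2,2] : Matrix (Fin 5) (Fin 5) ℂ) ≠ 0
      norm_num [Matrix.trace, Fin.sum_univ_succ, Matrix.vecHead, Matrix.vecTail]
    have K1 : (A : Matrix (Fin 4) (Fin 4) ℂ) * !![1,0,0,0; 0,1,0,0; 0,0,1,0; 0,0,0,-1]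
        = !![1,0,0,0; 0,1,0,0; 0,0,1,0; 0,0,0,-1] * (A : Matrix (Fin 4) (Fin 4) ℂ) :=
      comm_lift A g₁ cA1.symm tr1
    have K2 : (A : Matrix (Fin 4) (Fin 4) ℂ) * !![1,0,0,0; 0,1,0,0; 0,0,0,1; 0,0,1,0]
        = !![1,0,0,0; 0,1,0,0; 0,0,0,1; 0,0,1,0] * (A : Matrix (Fin 4) (Fin 4) ℂ) :=
      comm_lift A g₂ cA2.symm tr2
    have K3 : (A : Matrix (Fin 4) (Fin 4) ℂ) * !![1,0,0,0; 0,0,1,0; 0,1,0,0; 0,0,0,1]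
        = !![1,0,0,0; 0,0,1,0; 0,1,0,0; 0,0,0,1] * (A : Matrix (Fin 4) (Fin 4) ℂ) :=
      comm_lift A g₃ cA3.symm tr3
    have K5 : (A : Matrix (Fin 4) (Fin 4) ℂ) * !![1,-1,0,0; 1,1,0,0; 0,0,1,-1; 0,0,1,1]
        = !![1,-1,0,0; 1,1,0,0; 0,0,1,-1; 0,0,1,1] * (A : Matrix (Fin 4) (Fin 4) ℂ) :=
      comm_lift A g₅ cA5.symm tr5
    have L1 : (B : Matrix (Fin 5) (Fin 5) ℂ) * !![1,0,0,0,0; 0,-1,0,0,0; 0,0,1,0,0; 0,0,0,1,0; 0,0,0,0,1]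
        = !![1,0,0,0,0; 0,-1,0,0,0; 0,0,1,0,0; 0,0,0,1,0; 0,0,0,0,1] * (B : Matrix (Fin 5) (Fin 5) ℂ) :=
      comm_lift B h₁ cB1.symm sr1
    have L2 : (B : Matrix (Fin 5) (Fin 5) ℂ) * !![1,0,0,0,0; 0,1,0,0,0; 0,0,1,0,0; 0,0,0,0,1; 0,0,0,1,0]
        = !![1,0,0,0,0; 0,1,0,0,0; 0,0,1,0,0; 0,0,0,0,1; 0,0,0,1,0] * (B : Matrix (Fin 5) (Fin 5) ℂ) :=
      comm_lift B h₂ cB2.symm sr2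
    have L3 : (B : Matrix (Fin 5) (Fin 5) ℂ) * !![1,0,0,0,0; 0,1,0,0,0; 0,0,0,1,0; 0,0,1,0,0; 0,0,0,0,1]
        = !![1,0,0,0,0; 0,1,0,0,0; 0,0,0,1,0; 0,0,1,0,0; 0,0,0,0,1] * (B : Matrix (Fin 5) (Fin 5) ℂ) :=
      comm_lift B h₃ cB3.symm sr3
    have L4 : (B : Matrix (Fin 5) (Fin 5) ℂ) * !![1,0,0,0,0; 0,-1,0,0,0; 0,0,1,0,0; 0,0,0,-1,0; 0,0,0,0,-1]
        = !![1,0,0,0,0; 0,-1,0,0,0; 0,0,1,0,0; 0,0,0,-1,0; 0,0,0,0,-1] * (B : Matrix (Fin 5) (Fin 5) ℂ) :=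
      comm_lift B h₄ cB4.symm sr4
    have L5 : (B : Matrix (Fin 5) (Fin 5) ℂ) * !![2,0,1,0,0; 0,0,0,8,-8; 12,0,-2,0,0; 0,1,0,2,2; 0,-1,0,2,2]
        = !![2,0,1,0,0; 0,0,0,8,-8; 12,0,-2,0,0; 0,1,0,2,2; 0,-1,0,2,2] * (B : Matrix (Fin 5) (Fin 5) ℂ) :=
      comm_lift B h₅ cB5.symm sr5
    have hA1 : toPGL 4 A = 1 := (QuotientGroup.eq_one_iff A).mpr
      (mem_scalarUnits_of_eq_smul_one 4 A _ (comm4 _ K1 K2 K3 K5))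
    have hB1 : toPGL 5 B = 1 := (QuotientGroup.eq_one_iff B).mpr
      (mem_scalarUnits_of_eq_smul_one 5 B _ (comm5 _ L1 L2 L3 L4 L5))
    rw [Subgroup.mem_bot]
    exact Subtype.ext (Prod.ext hA1 hB1)
  refine ⟨hcenter, ⟨fun e => ?_⟩⟩
  set p : Multiplicative (ZMod 2 × ZMod 2 × ZMod 2 × ZMod 2) × Equiv.Perm (Fin 6) :=
    (Multiplicative.ofAdd ((1 : ZMod 2), (0 : ZMod 2), (0 : ZMod 2), (0 : ZMod 2)), 1) with hp_def
  have hp : p ≠ 1 := by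
    intro h
    have h1 := congrArg Prod.fst h
    simp only [hp_def] at h1
    have := congrArg Multiplicative.toAdd h1
    simp at this
  have hpc : ∀ q : Multiplicative (ZMod 2 × ZMod 2 × ZMod 2 × ZMod 2) × Equiv.Perm (Fin 6),
      q * p = p * q := by
    intro q
    have h1 : (q * p).1 = (p * q).1 := mul_comm _ _
    have h2 : (q * p).2 = (p * q).2 := by simp [hp_def]
    exact Prod.ext h1 h2
  have hcp : e.symm p ∈ Subgroup.center Ω :=
    Subgroup.mem_center_iff.mpr fun g => e.injective (by
      rw [_root_.map_mul, _root_.map_mul, MulEquiv.apply_symm_apply]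
      exact hpc (e g))
  rw [hcenter, Subgroup.mem_bot] at hcp
  exact hp (by simpa using congrArg e hcp)
end
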